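/- arXiv:2107.13288 — 4 statements merged into one kernel-verified Lean document; each statement's English description precedes it below -/
import Mathlib

section
/- The KMS wedge domain and the positivity domain on anti-de Sitter space coincide: W_M^{KMS}(h) = W_M⁺(h). -/
noncomputable section

/-- `V = ℝ^{d+1}`. -/
abbrev Vd (d : ℕ) : Type := Fin (d + 1) → ℝ

/-- The symmetric bilinear form `β(x,y) = x₀y₀ + x₁y₁ − x₂y₂ − ⋯ − x_dy_d`. -/
def betaB (d : ℕ) (x y : Vd d) : ℝ :=
  ∑ j : Fin (d + 1), (if (j : ℕ) ≤ 1 then (1 : ℝ) else -1) * x j * y j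

abbrev Mat (d : ℕ) : Type := Matrix (Fin (d + 1)) (Fin (d + 1)) ℝ

/-- The group `O(β)` of linear automorphisms of `V` preserving `β`,
as a set of matrices (with the subspace topology of `End(V)`). -/
def Obeta (d : ℕ) : Set (Mat d) :=
  {g | IsUnit g ∧ ∀ x y : Vd d, betaB d (g.mulVec x) (g.mulVec y) = betaB d x y}

/-- `G = SO_{2,d-1}(ℝ)_e`, the identity component of `O(β)`. -/
def Gset (d : ℕ) : Set (Mat d) := connectedComponentIn (Obeta d) 1

/-- Anti-de Sitter space `AdS^d = {x : β(x,x) = 1}`. -/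
def AdS (d : ℕ) : Set (Vd d) := {x | betaB d x x = 1}

/-- Standard basis vector `e_i`. -/
def evec (d : ℕ) (i : Fin (d + 1)) : Vd d := fun j => if j = i then 1 else 0

/-- The positive causal cone `V₊(e₀)` at the base point. -/
def Vplus (d : ℕ) : Set (Vd d) :=
  {v | betaB d (evec d 0) v = 0 ∧ 0 < betaB d v v ∧ 0 < betaB d v (evec d 1)}

/-- A pair `(x,y)` with `x ∈ M`, `β(x,y) = 0` is positive if some `g ∈ G`
moves it into the positive cone at the base point. -/
def posPair (d : ℕ) (x y : Vd d) : Prop :=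
  ∃ g ∈ Gset d, g.mulVec x = evec d 0 ∧ g.mulVec y ∈ Vplus d

/-- Representing `z = x + iy ∈ V_ℂ` as the pair `(x,y)`: the set
`M_ℂ ∩ (V + i V_{>0})`. -/
def TubeSrc (d : ℕ) : Set (Vd d × Vd d) :=
  {p | betaB d p.1 p.1 - betaB d p.2 p.2 = 1 ∧ betaB d p.1 p.2 = 0 ∧ 0 < betaB d p.2 p.2}

/-- The positive tube domain `𝒯_M⁺`: those `z = x + iy` in `M_ℂ ∩ 𝒯_V` for which
`Γ(z) = β(x,x)^{-1/2}(x,y)` is a positive pair. -/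
def TubePlus (d : ℕ) : Set (Vd d × Vd d) :=
  {p | p ∈ TubeSrc d ∧
    posPair d ((Real.sqrt (betaB d p.1 p.1))⁻¹ • p.1) ((Real.sqrt (betaB d p.1 p.1))⁻¹ • p.2)}

/-- The involution `τ_h = diag(1,−1,−1,1,…,1)`. -/
def tauh (d : ℕ) : Mat d :=
  Matrix.diagonal fun j : Fin (d + 1) => if (j : ℕ) = 1 ∨ (j : ℕ) = 2 then (-1 : ℝ) else 1

/-- The Euler element `h` with `h e₁ = e₂`, `h e₂ = e₁`, `h e_j = 0` otherwise. -/
def hmat (d : ℕ) : Mat d :=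
  Matrix.of fun i j : Fin (d + 1) =>
    if ((i : ℕ) = 1 ∧ (j : ℕ) = 2) ∨ ((i : ℕ) = 2 ∧ (j : ℕ) = 1) then (1 : ℝ) else 0

/-- The centralizer `G^h = {g ∈ G : gh = hg}`. -/
def Gh (d : ℕ) : Set (Mat d) := {g ∈ Gset d | g * hmat d = hmat d * g}

/-- The positivity domain `W_M⁺(h) = {x ∈ M : (x, hx) is positive}`. -/
def WplusDom (d : ℕ) : Set (Vd d) := {x ∈ AdS d | posPair d x ((hmat d).mulVec x)}

/-- `α_{it}(x) = (x₀, cos t·x₁ + i sin t·x₂, cos t·x₂ + i sin t·x₁, x₃, …, x_d)`,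
written as a pair (real part, imaginary part). -/
def alphaIt (d : ℕ) (t : ℝ) (x : Vd d) : Vd d × Vd d :=
  (fun j => if (j : ℕ) = 1 ∨ (j : ℕ) = 2 then Real.cos t * x j else x j,
   fun j => if (j : ℕ) = 1 then Real.sin t * x 2
            else if (j : ℕ) = 2 then Real.sin t * x 1 else 0)

/-- The KMS wedge domain `W_M^{KMS}(h)`. -/
def KMSdom (d : ℕ) : Set (Vd d) :=
  {x ∈ AdS d | ∀ t : ℝ, 0 < t → t < Real.pi → alphaIt d t x ∈ TubePlus d}

namespace AdsAux

variable {d : ℕ}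

lemma val1 (hd : 2 ≤ d) : ((1 : Fin (d+1)) : ℕ) = 1 := by
  rw [Fin.val_one'] ; exact Nat.mod_eq_of_lt (by omega)
lemma val2 (hd : 2 ≤ d) : ((2 : Fin (d+1)) : ℕ) = 2 := Fin.val_cast_of_lt (by omega : (2:ℕ) < d + 1)

def tailF (d : ℕ) : Finset (Fin (d+1)) := Finset.univ.filter (fun j => 2 ≤ (j:ℕ))

def tip (d : ℕ) (x y : Vd d) : ℝ := ∑ j ∈ tailF d, x j * y j

lemma mem_tailF {j : Fin (d+1)} : j ∈ tailF d ↔ 2 ≤ (j:ℕ) := by simp [tailF]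

lemma tail_ne0 (hd : 2 ≤ d) {j : Fin (d+1)} (hj : j ∈ tailF d) : j ≠ 0 := by
  rw [mem_tailF] at hj
  intro h; rw [h] at hj; simp at hj

lemma tail_ne1 (hd : 2 ≤ d) {j : Fin (d+1)} (hj : j ∈ tailF d) : j ≠ 1 := by
  rw [mem_tailF] at hj
  intro h; rw [h, val1 hd] at hj; omega

lemma two_mem_tail (hd : 2 ≤ d) : (2 : Fin (d+1)) ∈ tailF d := by
  rw [mem_tailF, val2 hd]

lemma fin_cases3 (hd : 2 ≤ d) (j : Fin (d+1)) : j = 0 ∨ j = 1 ∨ j ∈ tailF d := by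
  rcases Nat.lt_or_ge (j:ℕ) 2 with h | h
  · rcases Nat.lt_or_ge (j:ℕ) 1 with h1 | h1
    · left; apply Fin.ext; simpa using Nat.lt_one_iff.mp h1
    · right; left; apply Fin.ext; rw [val1 hd]; omega
  · right; right; exact mem_tailF.mpr h

lemma tip_nonneg (x : Vd d) : 0 ≤ tip d x x :=
  Finset.sum_nonneg fun j _ => mul_self_nonneg _

lemma tip_comm (x y : Vd d) : tip d x y = tip d y x :=
  Finset.sum_congr rfl fun j _ => mul_comm _ _

lemma betaB_split (hd : 2 ≤ d) (x y : Vd d) :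
    betaB d x y = x 0 * y 0 + x 1 * y 1 - tip d x y := by
  have key := Finset.sum_filter_add_sum_filter_not Finset.univ
    (fun j : Fin (d+1) => ((j:ℕ) ≤ 1))
    (fun j => (if (j:ℕ) ≤ 1 then (1:ℝ) else -1) * x j * y j)
  have h01 : Finset.univ.filter (fun j : Fin (d+1) => ((j:ℕ) ≤ 1)) = {0, 1} := by
    ext j
    simp only [Finset.mem_filter, Finset.mem_univ, true_and, Finset.mem_insert,
      Finset.mem_singleton, Fin.ext_iff, Fin.val_zero, val1 hd]
    omega
  have hne : (0 : Fin (d+1)) ≠ 1 := by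
    simp only [Ne, Fin.ext_iff, Fin.val_zero, val1 hd]; omega
  have htail : Finset.univ.filter (fun j : Fin (d+1) => ¬((j:ℕ) ≤ 1)) = tailF d := by
    ext j; simp [tailF]; omega
  rw [betaB, ← key, h01, htail, Finset.sum_insert (by simpa using hne), Finset.sum_singleton]
  have h0 : (((0:Fin (d+1)) :ℕ) ≤ 1) := by simp
  have h1 : (((1:Fin (d+1)) :ℕ) ≤ 1) := by rw [val1 hd]
  rw [if_pos h0, if_pos h1]
  have : ∑ j ∈ tailF d, (if (j:ℕ) ≤ 1 then (1:ℝ) else -1) * x j * y j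
       = ∑ j ∈ tailF d, -(x j * y j) := by
    refine Finset.sum_congr rfl fun j hj => ?_
    rw [if_neg (by have := mem_tailF.mp hj; omega)]; ring
  rw [this, Finset.sum_neg_distrib]
  unfold tip; ring


lemma zero_ne_one' (hd : 2 ≤ d) : (0 : Fin (d+1)) ≠ 1 := by
  simp only [Ne, Fin.ext_iff, Fin.val_zero, val1 hd]; omega

lemma two_ne_zero' (hd : 2 ≤ d) : (2 : Fin (d+1)) ≠ 0 :=
  tail_ne0 hd (two_mem_tail hd)

lemma two_ne_one' (hd : 2 ≤ d) : (2 : Fin (d+1)) ≠ 1 :=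
  tail_ne1 hd (two_mem_tail hd)

lemma tip_e0_left (hd : 2 ≤ d) (v : Vd d) : tip d (evec d 0) v = 0 :=
  Finset.sum_eq_zero fun j hj => by
    rw [evec, if_neg (tail_ne0 hd hj), zero_mul]

lemma tip_e1_right (hd : 2 ≤ d) (v : Vd d) : tip d v (evec d 1) = 0 :=
  Finset.sum_eq_zero fun j hj => by
    rw [evec, if_neg (tail_ne1 hd hj), mul_zero]

lemma evec_self (i : Fin (d+1)) : evec d i i = 1 := by simp [evec]

lemma evec_ne {i j : Fin (d+1)} (h : j ≠ i) : evec d i j = 0 := by simp [evec, h]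

lemma betaB_e0_left (hd : 2 ≤ d) (v : Vd d) : betaB d (evec d 0) v = v 0 := by
  rw [betaB_split hd, tip_e0_left hd, evec_self, evec_ne (zero_ne_one'' hd)]
  ring
  where zero_ne_one'' (hd : 2 ≤ d) : (1 : Fin (d+1)) ≠ 0 := (zero_ne_one' hd).symm

lemma betaB_e1_right (hd : 2 ≤ d) (v : Vd d) : betaB d v (evec d 1) = v 1 := by
  rw [betaB_split hd, tip_e1_right hd, evec_self, evec_ne (zero_ne_one' hd)]
  ring

lemma betaB_e0e0 (hd : 2 ≤ d) : betaB d (evec d 0) (evec d 0) = 1 := by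
  rw [betaB_e0_left hd, evec_self]

/-- vector with vanishing first two coordinates has nonpositive β-square -/
lemma betaB_nonpos (hd : 2 ≤ d) (v : Vd d) (h0 : v 0 = 0) (h1 : v 1 = 0) :
    betaB d v v ≤ 0 := by
  rw [betaB_split hd, h0, h1]
  have := tip_nonneg (d := d) v
  linarith

lemma betaB_combo (a b : ℝ) (x y : Vd d) :
    betaB d (fun j => a * x j + b * y j) (fun j => a * x j + b * y j)
      = a^2 * betaB d x x + (2*(a*b)) * betaB d x y + b^2 * betaB d y y := by
  simp only [betaB, Finset.mul_sum, ← Finset.sum_add_distrib]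
  refine Finset.sum_congr rfl fun j _ => by ring

def fval (x y : Vd d) : ℝ := x 0 * y 1 - x 1 * y 0

lemma fval_ne (hd : 2 ≤ d) {x y : Vd d} (hx : 0 < betaB d x x) (hy : 0 < betaB d y y)
    (hxy : betaB d x y = 0) : fval x y ≠ 0 := by
  intro hD
  unfold fval at hD
  by_cases h0 : x 0 = 0 ∧ y 0 = 0
  · by_cases hx1 : x 1 = 0
    · have := betaB_nonpos hd x h0.1 hx1; linarith
    · -- use w = y 1 • x - x 1 • y
      set w : Vd d := fun j => y 1 * x j + (-(x 1)) * y j with hw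
      have hw0 : w 0 = 0 := by rw [hw]; simp [h0.1, h0.2]
      have hw1 : w 1 = 0 := by rw [hw]; ring
      have hbw := betaB_combo (y 1) (-(x 1)) x y
      rw [hxy] at hbw
      have hwpos : 0 < betaB d w w := by
        rw [hw, hbw]
        have h1 : 0 < (x 1)^2 * betaB d y y := by positivity
        have h2 : 0 ≤ (y 1)^2 * betaB d x x := by positivity
        nlinarith
      have := betaB_nonpos hd w hw0 hw1
      linarith
  · -- use u = y 0 • x - x 0 • y
    set u : Vd d := fun j => y 0 * x j + (-(x 0)) * y j with hu
    have hu0 : u 0 = 0 := by rw [hu]; ring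
    have hu1 : u 1 = 0 := by
      show y 0 * x 1 + -(x 0) * y 1 = 0
      linear_combination -hD
    have hbu := betaB_combo (y 0) (-(x 0)) x y
    rw [hxy] at hbu
    have hupos : 0 < betaB d u u := by
      rw [hu, hbu]
      rcases not_and_or.mp h0 with h | h
      · have h1 : 0 < (x 0)^2 * betaB d y y := by positivity
        have h2 : 0 ≤ (y 0)^2 * betaB d x x := by positivity
        nlinarith
      · have h1 : 0 < (y 0)^2 * betaB d x x := by positivity
        have h2 : 0 ≤ (x 0)^2 * betaB d y y := by positivity
        nlinarith
    have := betaB_nonpos hd u hu0 hu1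
    linarith


lemma Obeta_one : (1 : Mat d) ∈ Obeta d :=
  ⟨isUnit_one, fun x y => by rw [Matrix.one_mulVec, Matrix.one_mulVec]⟩

lemma Obeta_mul {g h : Mat d} (hg : g ∈ Obeta d) (hh : h ∈ Obeta d) : g * h ∈ Obeta d :=
  ⟨hg.1.mul hh.1, fun x y => by
    rw [← Matrix.mulVec_mulVec, ← Matrix.mulVec_mulVec, hg.2, hh.2]⟩

lemma one_mem_Gset : (1 : Mat d) ∈ Gset d := mem_connectedComponentIn Obeta_one

lemma Gset_sub : Gset d ⊆ Obeta d := connectedComponentIn_subset _ _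

lemma cont_mul_mat : Continuous (fun p : Mat d × Mat d => p.1 * p.2) :=
  Continuous.matrix_mul continuous_fst continuous_snd

lemma Gset_mul {g h : Mat d} (hg : g ∈ Gset d) (hh : h ∈ Gset d) : g * h ∈ Gset d := by
  have hS : IsPreconnected ((fun p : Mat d × Mat d => p.1 * p.2) '' (Gset d ×ˢ Gset d)) :=
    (IsPreconnected.prod isPreconnected_connectedComponentIn
      isPreconnected_connectedComponentIn).image _ cont_mul_mat.continuousOn
  have hsub : (fun p : Mat d × Mat d => p.1 * p.2) '' (Gset d ×ˢ Gset d) ⊆ Obeta d := by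
    rintro _ ⟨⟨a, b⟩, ⟨ha, hb⟩, rfl⟩
    exact Obeta_mul (Gset_sub ha) (Gset_sub hb)
  have hone : (1 : Mat d) ∈ (fun p : Mat d × Mat d => p.1 * p.2) '' (Gset d ×ˢ Gset d) :=
    ⟨(1, 1), ⟨one_mem_Gset, one_mem_Gset⟩, mul_one 1⟩
  exact hS.subset_connectedComponentIn hone hsub ⟨(g, h), ⟨hg, hh⟩, rfl⟩

lemma cont_mulVec_entry (x : Vd d) (i : Fin (d+1)) :
    Continuous (fun a : Mat d => a.mulVec x i) := by
  simp only [Matrix.mulVec, dotProduct]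
  exact continuous_finset_sum _ fun j _ =>
    ((continuous_id.matrix_elem i j).mul continuous_const)

/-- the sign of `fval` is invariant under the identity component. -/
lemma fval_pos_iff (hd : 2 ≤ d) {g : Mat d} (hg : g ∈ Gset d) {x y : Vd d}
    (hx : 0 < betaB d x x) (hy : 0 < betaB d y y) (hxy : betaB d x y = 0) :
    (0 < fval x y ↔ 0 < fval (g.mulVec x) (g.mulVec y)) := by
  set F : Mat d → ℝ := fun a => fval (a.mulVec x) (a.mulVec y) with hF
  have hFc : Continuous F := by
    unfold F
    unfold fval
    exact ((cont_mulVec_entry x 0).mul (cont_mulVec_entry y 1)).sub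
      ((cont_mulVec_entry x 1).mul (cont_mulVec_entry y 0))
  have hne : ∀ a ∈ Gset d, F a ≠ 0 := by
    intro a ha
    have hOb := Gset_sub ha
    refine fval_ne hd ?_ ?_ ?_
    · rw [hOb.2 x x]; exact hx
    · rw [hOb.2 y y]; exact hy
    · rw [hOb.2 x y]; exact hxy
  have h1 : F 1 = fval x y := by simp only [hF, Matrix.one_mulVec]
  have hpc : IsPreconnected (Gset d) := isPreconnected_connectedComponentIn
  constructor
  · intro h
    rcases lt_trichotomy (F g) 0 with hlt | heq | hgt
    · exfalso
      have : (0:ℝ) ∈ Set.Icc (F g) (F 1) := ⟨hlt.le, by rw [h1]; exact h.le⟩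
      obtain ⟨a, ha, ha0⟩ := hpc.intermediate_value hg one_mem_Gset hFc.continuousOn this
      exact hne a ha ha0
    · exact absurd heq (hne g hg)
    · exact hgt
  · intro h
    rcases lt_trichotomy (F 1) 0 with hlt | heq | hgt
    · exfalso
      have : (0:ℝ) ∈ Set.Icc (F 1) (F g) := ⟨hlt.le, h.le⟩
      obtain ⟨a, ha, ha0⟩ := hpc.intermediate_value one_mem_Gset hg hFc.continuousOn this
      exact hne a ha ha0
    · exact absurd heq (hne 1 one_mem_Gset)
    · rw [← h1]; exact hgt


def matOf (d : ℕ) (L : Vd d → Vd d) : Mat d := Matrix.of fun i j => L (evec d j) i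

lemma sum_smul_evec (x : Vd d) : ∑ j, x j • evec d j = x := by
  funext k
  rw [Finset.sum_apply]
  simp only [Pi.smul_apply, evec, smul_eq_mul, mul_ite, mul_one, mul_zero]
  rw [Finset.sum_ite_eq Finset.univ k x]
  simp

lemma mulVec_matOf (L : Vd d → Vd d) (hL : IsLinearMap ℝ L) (x : Vd d) :
    (matOf d L).mulVec x = L x := by
  have hLl : L = ⇑(hL.mk' L) := rfl
  funext i
  have : (matOf d L).mulVec x i = ∑ j, x j • L (evec d j) i := by
    simp only [matOf, Matrix.mulVec, dotProduct, Matrix.of_apply, smul_eq_mul]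
    exact Finset.sum_congr rfl fun j _ => mul_comm _ _
  rw [this]
  conv_rhs => rw [← sum_smul_evec x]
  rw [hLl]
  rw [map_sum (hL.mk' L) (fun j => x j • evec d j) Finset.univ]
  rw [Finset.sum_apply]
  refine Finset.sum_congr rfl fun j _ => ?_
  rw [map_smul]
  rfl

lemma mat_ext_mulVec {A B : Mat d} (h : ∀ x, A.mulVec x = B.mulVec x) : A = B := by
  ext i j
  have := congrFun (h (evec d j)) i
  simpa [Matrix.mulVec, dotProduct, evec, mul_ite] using this


/-! ### Rotations in the (0,1)-plane -/

def rotL (d : ℕ) (a b : ℝ) : Vd d → Vd d := fun v j =>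
  if j = 0 then a * v 0 + b * v 1 else if j = 1 then -b * v 0 + a * v 1 else v j

def rotM (d : ℕ) (a b : ℝ) : Mat d := matOf d (rotL d a b)

lemma rotL_linear (a b : ℝ) : IsLinearMap ℝ (rotL d a b) := by
  constructor
  · intro v w; funext j; simp only [rotL, Pi.add_apply]; split_ifs <;> ring
  · intro c v; funext j
    simp only [rotL, Pi.smul_apply, smul_eq_mul]; split_ifs <;> ring

lemma rotL_apply0 (a b : ℝ) (v : Vd d) : rotL d a b v 0 = a * v 0 + b * v 1 := by
  simp [rotL]

lemma rotL_apply1 (hd : 2 ≤ d) (a b : ℝ) (v : Vd d) :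
    rotL d a b v 1 = -b * v 0 + a * v 1 := by
  rw [rotL, if_neg (zero_ne_one' hd).symm, if_pos rfl]

lemma rotL_apply_tail (hd : 2 ≤ d) (a b : ℝ) (v : Vd d) {j : Fin (d+1)} (hj : j ∈ tailF d) :
    rotL d a b v j = v j := by
  rw [rotL, if_neg (tail_ne0 hd hj), if_neg (tail_ne1 hd hj)]

lemma rotM_mulVec (a b : ℝ) (x : Vd d) : (rotM d a b).mulVec x = rotL d a b x :=
  mulVec_matOf _ (rotL_linear a b) x

lemma tip_rot (hd : 2 ≤ d) (a b a' b' : ℝ) (v w : Vd d) :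
    tip d (rotL d a b v) (rotL d a' b' w) = tip d v w :=
  Finset.sum_congr rfl fun j hj => by
    rw [rotL_apply_tail hd _ _ _ hj, rotL_apply_tail hd _ _ _ hj]

lemma rotM_one : rotM d 1 0 = 1 := by
  apply mat_ext_mulVec
  intro x
  rw [rotM_mulVec, Matrix.one_mulVec]
  funext j
  rw [rotL]
  split_ifs with h1 h2
  · rw [h1]; ring
  · rw [h2]; ring
  · rfl

lemma rotM_mem_Obeta (hd : 2 ≤ d) {a b : ℝ} (hab : a^2 + b^2 = 1) :
    rotM d a b ∈ Obeta d := by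
  constructor
  · -- invertible
    have h1 : rotM d a b * rotM d a (-b) = 1 := by
      apply mat_ext_mulVec
      intro x
      rw [← Matrix.mulVec_mulVec, Matrix.one_mulVec, rotM_mulVec, rotM_mulVec]
      funext j
      rcases fin_cases3 hd j with h | h | h
      · rw [h, rotL_apply0, rotL_apply0, rotL_apply1 hd]
        linear_combination x 0 * hab
      · rw [h, rotL_apply1 hd, rotL_apply0, rotL_apply1 hd]
        linear_combination x 1 * hab
      · rw [rotL_apply_tail hd _ _ _ h, rotL_apply_tail hd _ _ _ h]
    have h2 : rotM d a (-b) * rotM d a b = 1 := by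
      apply mat_ext_mulVec
      intro x
      rw [← Matrix.mulVec_mulVec, Matrix.one_mulVec, rotM_mulVec, rotM_mulVec]
      funext j
      rcases fin_cases3 hd j with h | h | h
      · rw [h, rotL_apply0, rotL_apply0, rotL_apply1 hd]
        linear_combination x 0 * hab
      · rw [h, rotL_apply1 hd, rotL_apply0, rotL_apply1 hd]
        linear_combination x 1 * hab
      · rw [rotL_apply_tail hd _ _ _ h, rotL_apply_tail hd _ _ _ h]
    exact ⟨⟨rotM d a b, rotM d a (-b), h1, h2⟩, rfl⟩
  · intro v w
    rw [rotM_mulVec, rotM_mulVec, betaB_split hd, betaB_split hd, tip_rot hd,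
      rotL_apply0, rotL_apply0, rotL_apply1 hd, rotL_apply1 hd]
    linear_combination (v 0 * w 0 + v 1 * w 1) * hab

lemma rotM_mem_Gset (hd : 2 ≤ d) {a b : ℝ} (hab : a^2 + b^2 = 1) :
    rotM d a b ∈ Gset d := by
  set z : ℂ := ⟨a, b⟩ with hz
  have hznorm : ‖z‖ = 1 := by
    rw [Complex.norm_def, Complex.normSq_mk]
    rw [show a * a + b * b = 1 by nlinarith]
    exact Real.sqrt_one
  have hzne : z ≠ 0 := by
    intro h; rw [h] at hznorm; simp at hznorm
  set γ : ℝ → Mat d := fun s =>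
    rotM d (Complex.exp (s * Complex.log z)).re (Complex.exp (s * Complex.log z)).im with hγ
  have hunit : ∀ s : ℝ, (Complex.exp (s * Complex.log z)).re ^ 2
      + (Complex.exp (s * Complex.log z)).im ^ 2 = 1 := by
    intro s
    have habs : ‖Complex.exp (s * Complex.log z)‖ = 1 := by
      rw [Complex.norm_exp]
      have : ((s : ℂ) * Complex.log z).re = s * Real.log ‖z‖ := by
        simp [Complex.mul_re, Complex.log_re, Complex.log_im, Complex.ofReal_re,
          Complex.ofReal_im]
      rw [this, hznorm, Real.log_one, mul_zero, Real.exp_zero]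
    have := Complex.sq_norm (Complex.exp (s * Complex.log z))
    rw [habs] at this
    rw [Complex.normSq_apply] at this
    nlinarith [this]
  have hγcont : Continuous γ := by
    have hre : Continuous fun s : ℝ => (Complex.exp (s * Complex.log z)).re :=
      Complex.continuous_re.comp (Complex.continuous_exp.comp
        ((Complex.continuous_ofReal.mul continuous_const)))
    have him : Continuous fun s : ℝ => (Complex.exp (s * Complex.log z)).im :=
      Complex.continuous_im.comp (Complex.continuous_exp.comp
        ((Complex.continuous_ofReal.mul continuous_const)))
    rw [hγ]
    apply continuous_pi
    intro i
    apply continuous_pi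
    intro j
    simp only [rotM, matOf, Matrix.of_apply, rotL]
    split_ifs
    · exact (hre.mul continuous_const).add (him.mul continuous_const)
    · exact ((him.neg).mul continuous_const).add (hre.mul continuous_const)
    · exact continuous_const
  set S : Set (Mat d) := γ '' Set.Icc (0:ℝ) 1 with hS
  have hSpc : IsPreconnected S := (isPreconnected_Icc).image _ hγcont.continuousOn
  have hSsub : S ⊆ Obeta d := by
    rintro _ ⟨s, _, rfl⟩
    exact rotM_mem_Obeta hd (hunit s)
  have hγ0 : γ 0 = 1 := by
    rw [hγ]
    simp only [Complex.ofReal_zero, zero_mul, Complex.exp_zero, Complex.one_re, Complex.one_im]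
    exact rotM_one
  have h1S : (1 : Mat d) ∈ S := ⟨0, by simp, hγ0⟩
  have hγ1 : γ 1 = rotM d a b := by
    rw [hγ]
    simp only [Complex.ofReal_one, one_mul, Complex.exp_log hzne]
    rfl
  have hginS : rotM d a b ∈ S := ⟨1, by simp, hγ1⟩
  exact hSpc.subset_connectedComponentIn h1S hSsub hginS


/-! ### Boosts mixing coordinate 0 with the tail direction `q` -/

def booL (d : ℕ) (q : Vd d) (c s : ℝ) : Vd d → Vd d := fun v j =>
  if j = 0 then c * v 0 + s * tip d q v
  else if j = 1 then v 1
  else v j + ((c - 1) * tip d q v + s * v 0) * q j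

def booM (d : ℕ) (q : Vd d) (c s : ℝ) : Mat d := matOf d (booL d q c s)

lemma tip_def (x y : Vd d) : tip d x y = ∑ j ∈ tailF d, x j * y j := rfl

lemma tip_add_right (q v w : Vd d) : tip d q (v + w) = tip d q v + tip d q w := by
  rw [tip_def, tip_def, tip_def, ← Finset.sum_add_distrib]
  exact Finset.sum_congr rfl fun j _ => by simp [Pi.add_apply]; ring

lemma tip_smul_right (q : Vd d) (c : ℝ) (v : Vd d) :
    tip d q (c • v) = c * tip d q v := by
  rw [tip_def, tip_def, Finset.mul_sum]
  exact Finset.sum_congr rfl fun j _ => by simp [Pi.smul_apply]; ring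

lemma booL_linear (q : Vd d) (c s : ℝ) : IsLinearMap ℝ (booL d q c s) := by
  constructor
  · intro v w; funext j
    have h := tip_add_right q v w
    simp only [booL, Pi.add_apply]
    split_ifs <;> first
      | (rw [h]; ring)
      | rfl
  · intro cc v; funext j
    have h := tip_smul_right q cc v
    simp only [booL, Pi.smul_apply, smul_eq_mul]
    split_ifs <;> first
      | (rw [h]; ring)
      | rfl

lemma booL_apply0 (q : Vd d) (c s : ℝ) (v : Vd d) :
    booL d q c s v 0 = c * v 0 + s * tip d q v := by simp [booL]

lemma booL_apply1 (hd : 2 ≤ d) (q : Vd d) (c s : ℝ) (v : Vd d) :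
    booL d q c s v 1 = v 1 := by
  rw [booL, if_neg (zero_ne_one' hd).symm, if_pos rfl]

lemma booL_apply_tail (hd : 2 ≤ d) (q : Vd d) (c s : ℝ) (v : Vd d) {j : Fin (d+1)}
    (hj : j ∈ tailF d) :
    booL d q c s v j = v j + ((c - 1) * tip d q v + s * v 0) * q j := by
  rw [booL, if_neg (tail_ne0 hd hj), if_neg (tail_ne1 hd hj)]

lemma booM_mulVec (q : Vd d) (c s : ℝ) (x : Vd d) :
    (booM d q c s).mulVec x = booL d q c s x :=
  mulVec_matOf _ (booL_linear q c s) x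

lemma tip_q_booL (hd : 2 ≤ d) {q : Vd d} (hqq : tip d q q = 1) (c s : ℝ) (v : Vd d) :
    tip d q (booL d q c s v) = c * tip d q v + s * v 0 := by
  have key : tip d q (booL d q c s v)
      = ∑ j ∈ tailF d, (q j * v j + ((c - 1) * tip d q v + s * v 0) * (q j * q j)) := by
    rw [tip_def]
    refine Finset.sum_congr rfl fun j hj => ?_
    rw [booL_apply_tail hd _ _ _ _ hj]; ring
  rw [key, Finset.sum_add_distrib, ← Finset.mul_sum, ← tip_def, ← tip_def, hqq]; ring

lemma tip_boo_boo (hd : 2 ≤ d) {q : Vd d} (hqq : tip d q q = 1) (c s c' s' : ℝ) (v w : Vd d) :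
    tip d (booL d q c s v) (booL d q c' s' w)
      = tip d v w + ((c' - 1) * tip d q w + s' * w 0) * tip d q v
        + ((c - 1) * tip d q v + s * v 0) * tip d q w
        + ((c - 1) * tip d q v + s * v 0) * ((c' - 1) * tip d q w + s' * w 0) := by
  set A := (c - 1) * tip d q v + s * v 0
  set A' := (c' - 1) * tip d q w + s' * w 0
  have key : tip d (booL d q c s v) (booL d q c' s' w)
      = ∑ j ∈ tailF d, (v j * w j + A' * (q j * v j) + A * (q j * w j) + (A * A') * (q j * q j)) := by
    rw [tip_def]
    refine Finset.sum_congr rfl fun j hj => ?_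
    rw [booL_apply_tail hd _ _ _ _ hj, booL_apply_tail hd _ _ _ _ hj]; ring
  rw [key]
  simp only [Finset.sum_add_distrib, ← Finset.mul_sum, ← tip_def]
  have hqvc : tip d v q = tip d q v := tip_comm v q
  have hqwc : tip d w q = tip d q w := tip_comm w q
  rw [hqq]; ring

lemma booM_one (q : Vd d) : booM d q 1 0 = 1 := by
  apply mat_ext_mulVec
  intro x
  rw [booM_mulVec, Matrix.one_mulVec]
  funext j
  rw [booL]
  split_ifs with h1 h2
  · rw [h1]; ring
  · rw [h2]
  · ring

lemma booM_mem_Obeta (hd : 2 ≤ d) {q : Vd d} (hq0 : q 0 = 0) (hq1 : q 1 = 0)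
    (hqq : tip d q q = 1) {c s : ℝ} (hcs : c^2 - s^2 = 1) :
    booM d q c s ∈ Obeta d := by
  have hinv : ∀ (s₁ s₂ : ℝ), (c^2 + s₁ * s₂ = 1) → (s₁ + s₂ = 0) →
      booM d q c s₁ * booM d q c s₂ = 1 := by
    intro s₁ s₂ hc12 hs12
    apply mat_ext_mulVec
    intro x
    rw [← Matrix.mulVec_mulVec, Matrix.one_mulVec, booM_mulVec, booM_mulVec]
    funext j
    have htq := tip_q_booL hd hqq c s₂ x
    rcases fin_cases3 hd j with h | h | h
    · rw [h, booL_apply0, booL_apply0, htq]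
      linear_combination x 0 * hc12 + c * tip d q x * hs12
    · rw [h, booL_apply1 hd, booL_apply1 hd]
    · rw [booL_apply_tail hd _ _ _ _ h, booL_apply_tail hd _ _ _ _ h, htq, booL_apply0]
      linear_combination (q j * tip d q x) * hc12 + (q j * c * x 0) * hs12
  constructor
  · have h1 : booM d q c s * booM d q c (-s) = 1 := hinv s (-s) (by nlinarith) (by ring)
    have h2 : booM d q c (-s) * booM d q c s = 1 := hinv (-s) s (by nlinarith) (by ring)
    exact ⟨⟨booM d q c s, booM d q c (-s), h1, h2⟩, rfl⟩
  · intro v w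
    rw [booM_mulVec, booM_mulVec, betaB_split hd, betaB_split hd,
      tip_boo_boo hd hqq, booL_apply0, booL_apply0, booL_apply1 hd, booL_apply1 hd]
    linear_combination (v 0 * w 0 - tip d q v * tip d q w) * hcs

lemma booM_mem_Gset (hd : 2 ≤ d) {q : Vd d} (hq0 : q 0 = 0) (hq1 : q 1 = 0)
    (hqq : tip d q q = 1) (t : ℝ) :
    booM d q (Real.cosh t) (Real.sinh t) ∈ Gset d := by
  set γ : ℝ → Mat d := fun s => booM d q (Real.cosh (s * t)) (Real.sinh (s * t)) with hγ
  have hγcont : Continuous γ := by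
    have hc : Continuous fun s : ℝ => Real.cosh (s * t) :=
      Real.continuous_cosh.comp (continuous_id.mul continuous_const)
    have hs : Continuous fun s : ℝ => Real.sinh (s * t) :=
      Real.continuous_sinh.comp (continuous_id.mul continuous_const)
    rw [hγ]
    apply continuous_pi
    intro i
    apply continuous_pi
    intro j
    simp only [booM, matOf, Matrix.of_apply, booL]
    split_ifs
    · exact (hc.mul continuous_const).add (hs.mul continuous_const)
    · exact continuous_const
    · exact continuous_const.add
        ((((hc.sub continuous_const).mul continuous_const).add
          (hs.mul continuous_const)).mul continuous_const)
  set S : Set (Mat d) := γ '' Set.Icc (0:ℝ) 1 with hS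
  have hSpc : IsPreconnected S := (isPreconnected_Icc).image _ hγcont.continuousOn
  have hSsub : S ⊆ Obeta d := by
    rintro _ ⟨s, _, rfl⟩
    exact booM_mem_Obeta hd hq0 hq1 hqq (Real.cosh_sq_sub_sinh_sq (s * t))
  have hγ0 : γ 0 = 1 := by
    rw [hγ]; simp only [zero_mul, Real.cosh_zero, Real.sinh_zero]
    exact booM_one q
  have h1S : (1 : Mat d) ∈ S := ⟨0, by simp, hγ0⟩
  have hginS : booM d q (Real.cosh t) (Real.sinh t) ∈ S := ⟨1, by simp, by rw [hγ]; simp⟩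
  exact hSpc.subset_connectedComponentIn h1S hSsub hginS


/-! ### Transitivity: any unit vector moves to `e₀` -/

def qvec (d : ℕ) (m : ℝ) (x : Vd d) : Vd d :=
  fun j => if j = 0 then 0 else if j = 1 then 0 else x j / m

lemma qvec_zero (m : ℝ) (x : Vd d) : qvec d m x 0 = 0 := by
  rw [qvec, if_pos rfl]

lemma qvec_one (hd : 2 ≤ d) (m : ℝ) (x : Vd d) : qvec d m x 1 = 0 := by
  rw [qvec, if_neg (zero_ne_one' hd).symm, if_pos rfl]

lemma qvec_tail (hd : 2 ≤ d) (m : ℝ) (x : Vd d) {j : Fin (d+1)} (hj : j ∈ tailF d) :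
    qvec d m x j = x j / m := by
  rw [qvec, if_neg (tail_ne0 hd hj), if_neg (tail_ne1 hd hj)]

lemma exists_g (hd : 2 ≤ d) (x : Vd d) (hx : betaB d x x = 1) :
    ∃ g ∈ Gset d, g.mulVec x = evec d 0 := by
  have hsplit := betaB_split hd x x
  have htip : 0 ≤ tip d x x := tip_nonneg x
  have hr2 : x 0 * x 0 + x 1 * x 1 = 1 + tip d x x := by linarith
  have hr2pos : 0 < x 0 * x 0 + x 1 * x 1 := by linarith
  set r := Real.sqrt (x 0 * x 0 + x 1 * x 1) with hrdef
  have hr : 0 < r := Real.sqrt_pos.2 hr2pos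
  have hrne : r ≠ 0 := ne_of_gt hr
  have hrr : r * r = x 0 * x 0 + x 1 * x 1 := Real.mul_self_sqrt hr2pos.le
  have hab : (x 0 / r) ^ 2 + (x 1 / r) ^ 2 = 1 := by
    rw [div_pow, div_pow, ← add_div]
    rw [show x 0 ^ 2 + x 1 ^ 2 = r ^ 2 by nlinarith [hrr]]
    exact div_self (by positivity)
  have hg1 : rotM d (x 0 / r) (x 1 / r) ∈ Gset d := rotM_mem_Gset hd hab
  set u := rotL d (x 0 / r) (x 1 / r) x with hudef
  have humul : (rotM d (x 0 / r) (x 1 / r)).mulVec x = u := rotM_mulVec _ _ x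
  have hu0 : u 0 = r := by
    rw [hudef, rotL_apply0, div_mul_eq_mul_div, div_mul_eq_mul_div, ← add_div,
      ← hrr]
    exact mul_div_cancel_right₀ r hrne
  have hu1 : u 1 = 0 := by
    rw [hudef, rotL_apply1 hd]
    field_simp
    ring
  have hutail : ∀ j ∈ tailF d, u j = x j := fun j hj => by
    rw [hudef, rotL_apply_tail hd _ _ _ hj]
  by_cases hm : tip d x x = 0
  · -- x is already in the positive plane: u = e₀
    refine ⟨rotM d (x 0 / r) (x 1 / r), hg1, ?_⟩
    rw [humul]
    have hr1 : r = 1 := by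
      rw [hrdef, hr2, hm, add_zero, Real.sqrt_one]
    have hzero : ∀ j ∈ tailF d, x j = 0 := by
      intro j hj
      have h := (Finset.sum_eq_zero_iff_of_nonneg
        (fun k _ => mul_self_nonneg (x k))).mp hm j hj
      nlinarith [h]
    funext j
    rcases fin_cases3 hd j with h | h | h
    · rw [h, hu0, hr1, evec_self]
    · rw [h, hu1, evec_ne (zero_ne_one' hd).symm]
    · rw [hutail j h, hzero j h, evec_ne (tail_ne0 hd h)]
  · have hmpos' : 0 < tip d x x := lt_of_le_of_ne htip (Ne.symm hm)
    set m := Real.sqrt (tip d x x) with hmdef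
    have hmpos : 0 < m := Real.sqrt_pos.2 hmpos'
    have hmne : m ≠ 0 := ne_of_gt hmpos
    have hmm : m * m = tip d x x := Real.mul_self_sqrt htip
    have hqq : tip d (qvec d m x) (qvec d m x) = 1 := by
      have h1 : tip d (qvec d m x) (qvec d m x) = ∑ j ∈ tailF d, (x j * x j) / (m * m) := by
        rw [tip_def]
        refine Finset.sum_congr rfl fun j hj => ?_
        rw [qvec_tail hd _ _ hj]; ring
      rw [h1, ← Finset.sum_div, ← tip_def, ← hmm, div_self (by positivity)]
    have hqu : tip d (qvec d m x) u = m := by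
      have h1 : tip d (qvec d m x) u = ∑ j ∈ tailF d, (x j * x j) / m := by
        rw [tip_def]
        refine Finset.sum_congr rfl fun j hj => ?_
        rw [qvec_tail hd _ _ hj, hutail j hj]; ring
      rw [h1, ← Finset.sum_div, ← tip_def, ← hmm]
      rw [mul_div_assoc, div_self hmne, mul_one]
    have hcosh : Real.cosh (-Real.arsinh m) = r := by
      rw [Real.cosh_neg, Real.cosh_arsinh]
      rw [show (1:ℝ) + m ^ 2 = r * r by nlinarith [hmm, hrr, hr2]]
      exact Real.sqrt_mul_self hr.le
    have hsinh : Real.sinh (-Real.arsinh m) = -m := by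
      rw [Real.sinh_neg, Real.sinh_arsinh]
    have hg2 : booM d (qvec d m x) (Real.cosh (-Real.arsinh m)) (Real.sinh (-Real.arsinh m))
        ∈ Gset d :=
      booM_mem_Gset hd (qvec_zero m x) (qvec_one hd m x) hqq _
    rw [hcosh, hsinh] at hg2
    refine ⟨booM d (qvec d m x) r (-m) * rotM d (x 0 / r) (x 1 / r),
      Gset_mul hg2 hg1, ?_⟩
    rw [← Matrix.mulVec_mulVec, humul, booM_mulVec]
    funext j
    rcases fin_cases3 hd j with h | h | h
    · rw [h, booL_apply0, hqu, hu0, evec_self]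
      linear_combination hrr - hmm + hr2
    · rw [h, booL_apply1 hd, hu1, evec_ne (zero_ne_one' hd).symm]
    · rw [booL_apply_tail hd _ _ _ _ h, hqu, hu0, hutail j h, qvec_tail hd _ _ h,
        evec_ne (tail_ne0 hd h)]
      have hco : (r - 1) * m + -m * r = -m := by ring
      rw [hco]
      field_simp
      ring


lemma fval_e0 (hd : 2 ≤ d) (v : Vd d) : fval (evec d 0) v = v 1 := by
  rw [fval, evec_self, evec_ne (zero_ne_one' hd).symm]
  ring

/-- Characterization of positive pairs. -/
lemma posPair_iff (hd : 2 ≤ d) (x y : Vd d) :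
    posPair d x y ↔
      betaB d x x = 1 ∧ betaB d x y = 0 ∧ 0 < betaB d y y ∧ 0 < fval x y := by
  constructor
  · rintro ⟨g, hg, hgx, hgy0, hgyy, hgy1⟩
    have hOb := Gset_sub hg
    have hxx : betaB d x x = 1 := by
      rw [← hOb.2 x x, hgx, betaB_e0e0 hd]
    have hxy : betaB d x y = 0 := by
      rw [← hOb.2 x y, hgx]; exact hgy0
    have hyy : 0 < betaB d y y := by
      rw [← hOb.2 y y]; exact hgyy
    refine ⟨hxx, hxy, hyy, ?_⟩
    rw [fval_pos_iff hd hg (by rw [hxx]; norm_num) hyy hxy, hgx, fval_e0 hd]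
    rw [betaB_e1_right hd] at hgy1
    exact hgy1
  · rintro ⟨hxx, hxy, hyy, hf⟩
    obtain ⟨g, hg, hgx⟩ := exists_g hd x hxx
    have hOb := Gset_sub hg
    refine ⟨g, hg, hgx, ?_, ?_, ?_⟩
    · rw [← hgx, hOb.2 x y]; exact hxy
    · rw [hOb.2 y y]; exact hyy
    · rw [betaB_e1_right hd, ← fval_e0 hd (g.mulVec y), ← hgx]
      exact (fval_pos_iff hd hg (by rw [hxx]; norm_num) hyy hxy).1 hf

lemma betaB_smul2 (a : ℝ) (u v : Vd d) :
    betaB d (a • u) (a • v) = a ^ 2 * betaB d u v := by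
  simp only [betaB, Pi.smul_apply, smul_eq_mul, Finset.mul_sum]
  exact Finset.sum_congr rfl fun j _ => by ring

lemma fval_smul2 (a : ℝ) (u v : Vd d) : fval (a • u) (a • v) = a ^ 2 * fval u v := by
  simp only [fval, Pi.smul_apply, smul_eq_mul]; ring

/-- posPair for a scaled pair, `0 < B`, `B = betaB x x`. -/
lemma posPair_scaled_iff (hd : 2 ≤ d) (x y : Vd d) {B : ℝ} (hB : 0 < B)
    (hBx : betaB d x x = B) :
    posPair d ((Real.sqrt B)⁻¹ • x) ((Real.sqrt B)⁻¹ • y) ↔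
      (betaB d x y = 0 ∧ 0 < betaB d y y ∧ 0 < fval x y) := by
  have hs : 0 < Real.sqrt B := Real.sqrt_pos.2 hB
  have hs2 : ((Real.sqrt B)⁻¹) ^ 2 = B⁻¹ := by
    rw [← one_div, div_pow, one_pow, Real.sq_sqrt hB.le, one_div]
  have hinvpos : 0 < ((Real.sqrt B)⁻¹ : ℝ) ^ 2 := by positivity
  rw [posPair_iff hd, betaB_smul2, betaB_smul2, betaB_smul2, fval_smul2, hBx, hs2]
  constructor
  · rintro ⟨_, h2, h3, h4⟩
    refine ⟨?_, ?_, ?_⟩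
    · have hB0 : (B:ℝ)⁻¹ ≠ 0 := by positivity
      exact (mul_eq_zero.mp h2).resolve_left hB0
    · nlinarith [h3, hB]
    · nlinarith [h4, hB]
  · rintro ⟨h2, h3, h4⟩
    have hBinv : 0 < (B:ℝ)⁻¹ := by positivity
    refine ⟨by rw [inv_mul_cancel₀ (ne_of_gt hB)], by rw [h2, mul_zero], ?_, ?_⟩
    · positivity
    · positivity


/-! ### Coordinates of `h x` and of `α_{it} x` -/

lemma veq0 {j : Fin (d+1)} : (j:ℕ) = 0 ↔ j = 0 := by
  rw [Fin.ext_iff, Fin.val_zero]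
lemma veq1 (hd : 2 ≤ d) {j : Fin (d+1)} : (j:ℕ) = 1 ↔ j = 1 := by
  rw [Fin.ext_iff, val1 hd]
lemma veq2 (hd : 2 ≤ d) {j : Fin (d+1)} : (j:ℕ) = 2 ↔ j = 2 := by
  rw [Fin.ext_iff, val2 hd]

lemma hmat_mulVec (hd : 2 ≤ d) (x : Vd d) :
    (hmat d).mulVec x = fun j => if j = 1 then x 2 else if j = 2 then x 1 else 0 := by
  funext i
  show ∑ j, hmat d i j * x j = _
  by_cases hi1 : i = 1
  · rw [if_pos hi1]
    rw [Finset.sum_eq_single_of_mem (2 : Fin (d+1)) (Finset.mem_univ _) ?_]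
    · rw [show hmat d i 2 = 1 from if_pos (Or.inl ⟨(veq1 hd).2 hi1, (veq2 hd).2 rfl⟩),
        one_mul]
    · intro b _ hb
      rw [show hmat d i b = 0 from if_neg ?_, zero_mul]
      rintro (⟨_, h2⟩ | ⟨h2, _⟩)
      · exact hb ((veq2 hd).1 h2)
      · rw [hi1, val1 hd] at h2; omega
  · by_cases hi2 : i = 2
    · rw [if_neg hi1, if_pos hi2]
      rw [Finset.sum_eq_single_of_mem (1 : Fin (d+1)) (Finset.mem_univ _) ?_]
      · rw [show hmat d i 1 = 1 from if_pos (Or.inr ⟨(veq2 hd).2 hi2, (veq1 hd).2 rfl⟩),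
          one_mul]
      · intro b _ hb
        rw [show hmat d i b = 0 from if_neg ?_, zero_mul]
        rintro (⟨h2, _⟩ | ⟨_, h2⟩)
        · rw [hi2, val2 hd] at h2; omega
        · exact hb ((veq1 hd).1 h2)
    · rw [if_neg hi1, if_neg hi2]
      refine Finset.sum_eq_zero fun b _ => ?_
      rw [show hmat d i b = 0 from if_neg ?_, zero_mul]
      rintro (⟨h2, _⟩ | ⟨h2, _⟩)
      · exact hi1 ((veq1 hd).1 h2)
      · exact hi2 ((veq2 hd).1 h2)

/-- `tip` of vectors agreeing off the coordinate 2. -/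
lemma tip_two (hd : 2 ≤ d) (u v : Vd d) (hv : ∀ j ∈ tailF d, j ≠ 2 → v j = 0) :
    tip d u v = u 2 * v 2 := by
  rw [tip_def]
  refine Finset.sum_eq_single_of_mem (2 : Fin (d+1)) (two_mem_tail hd) fun b hb hb2 => ?_
  rw [hv b hb hb2, mul_zero]

lemma tip_diff2 (hd : 2 ≤ d) (u v : Vd d) (h : ∀ j ∈ tailF d, j ≠ 2 → u j = v j) :
    tip d u u = tip d v v + (u 2 * u 2 - v 2 * v 2) := by
  have key : tip d u u - tip d v v = u 2 * u 2 - v 2 * v 2 := by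
    rw [tip_def, tip_def, ← Finset.sum_sub_distrib]
    refine Finset.sum_eq_single_of_mem (2 : Fin (d+1)) (two_mem_tail hd) fun b hb hb2 => ?_
    rw [h b hb hb2]; ring
  linarith

/-- membership of `α_{it} x` in the positive tube. -/
lemma alphaIt_mem_iff (hd : 2 ≤ d) (x : Vd d) (hx : betaB d x x = 1) {t : ℝ}
    (ht0 : 0 < t) (htpi : t < Real.pi) :
    alphaIt d t x ∈ TubePlus d ↔
      (x 1 * x 1 < x 2 * x 2 ∧ 0 < x 0 * x 2) := by
  have hsin : 0 < Real.sin t := Real.sin_pos_of_pos_of_lt_pi ht0 htpi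
  have pyth := Real.sin_sq_add_cos_sq t
  set c := Real.cos t with hc
  set s := Real.sin t with hs
  set xt : Vd d := fun j => if (j : ℕ) = 1 ∨ (j : ℕ) = 2 then c * x j else x j with hxt
  set yt : Vd d := fun j => if (j : ℕ) = 1 then s * x 2
      else if (j : ℕ) = 2 then s * x 1 else 0 with hyt
  have hmem : (alphaIt d t x ∈ TubePlus d) ↔
      ((betaB d xt xt - betaB d yt yt = 1 ∧ betaB d xt yt = 0 ∧ 0 < betaB d yt yt) ∧
        posPair d ((Real.sqrt (betaB d xt xt))⁻¹ • xt) ((Real.sqrt (betaB d xt xt))⁻¹ • yt)) :=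
    Iff.rfl
  -- conditions on indices
  have c0 : ¬(((0 : Fin (d+1)) : ℕ) = 1 ∨ ((0 : Fin (d+1)) : ℕ) = 2) := by
    rw [Fin.val_zero]; omega
  have c0a : ¬((0 : Fin (d+1)) : ℕ) = 1 := by rw [Fin.val_zero]; omega
  have c0b : ¬((0 : Fin (d+1)) : ℕ) = 2 := by rw [Fin.val_zero]; omega
  have c2a : ¬((2 : Fin (d+1)) : ℕ) = 1 := by rw [val2 hd]; omega
  -- coordinates of xt
  have hxt0 : xt 0 = x 0 := by rw [hxt]; exact if_neg c0
  have hxt1 : xt 1 = c * x 1 := by rw [hxt]; exact if_pos (Or.inl (val1 hd))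
  have hxt2 : xt 2 = c * x 2 := by rw [hxt]; exact if_pos (Or.inr (val2 hd))
  have hxttail : ∀ j ∈ tailF d, j ≠ 2 → xt j = x j := by
    intro j hj hj2
    rw [hxt]
    refine if_neg ?_
    rintro (h | h)
    · exact tail_ne1 hd hj ((veq1 hd).1 h)
    · exact hj2 ((veq2 hd).1 h)
  -- coordinates of yt
  have hyt0 : yt 0 = 0 := by
    rw [hyt]; exact (if_neg c0a).trans (if_neg c0b)
  have hyt1 : yt 1 = s * x 2 := by rw [hyt]; exact if_pos (val1 hd)
  have hyt2 : yt 2 = s * x 1 := by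
    rw [hyt]; exact (if_neg c2a).trans (if_pos (val2 hd))
  have hyttail : ∀ j ∈ tailF d, j ≠ 2 → yt j = 0 := by
    intro j hj hj2
    rw [hyt]
    exact (if_neg fun h => tail_ne1 hd hj ((veq1 hd).1 h)).trans
      (if_neg fun h => hj2 ((veq2 hd).1 h))
  -- betaB values
  have hxsplit := betaB_split hd x x
  have hBxt : betaB d xt xt = 1 + s^2 * (x 2 * x 2 - x 1 * x 1) := by
    rw [betaB_split hd, tip_diff2 hd xt x hxttail, hxt0, hxt1, hxt2]
    linear_combination hx - hxsplit + (x 1 * x 1 - x 2 * x 2) * pyth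
  have hByt : betaB d yt yt = s^2 * (x 2 * x 2 - x 1 * x 1) := by
    rw [betaB_split hd, tip_two hd yt yt hyttail, hyt0, hyt1, hyt2]
    ring
  have hBxtyt : betaB d xt yt = 0 := by
    rw [betaB_split hd, tip_two hd xt yt hyttail, hxt0, hxt1, hxt2, hyt0, hyt1, hyt2]
    ring
  have hfv : fval xt yt = s * (x 0 * x 2) := by
    rw [fval, hxt0, hxt1, hyt0, hyt1]
    ring
  clear_value xt yt
  clear hxt hyt hxttail hyttail c0 c0a c0b c2a hxt0 hxt1 hxt2 hyt0 hyt1 hyt2 hxsplit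
  rw [hmem, hBxt, hByt, hBxtyt]
  constructor
  · rintro ⟨⟨_, _, h3⟩, hpos⟩
    have hδ : x 1 * x 1 < x 2 * x 2 := by nlinarith [h3, sq_nonneg s]
    have hBpos : (0:ℝ) < 1 + s^2 * (x 2 * x 2 - x 1 * x 1) := by linarith
    have hchar := (posPair_scaled_iff hd xt yt hBpos hBxt).1 hpos
    refine ⟨hδ, ?_⟩
    have h4 := hchar.2.2
    rw [hfv] at h4
    nlinarith [h4, hsin]
  · rintro ⟨hδ, h02⟩
    have hD : (0:ℝ) < x 2 * x 2 - x 1 * x 1 := by linarith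
    have hs2 : (0:ℝ) < s^2 := pow_pos hsin 2
    have hBpos : (0:ℝ) < 1 + s^2 * (x 2 * x 2 - x 1 * x 1) := by nlinarith
    refine ⟨⟨by ring, rfl, mul_pos hs2 hD⟩, ?_⟩
    refine (posPair_scaled_iff hd xt yt hBpos hBxt).2 ⟨hBxtyt, ?_, ?_⟩
    · rw [hByt]; exact mul_pos hs2 hD
    · rw [hfv]; exact mul_pos hsin h02

/-- positivity domain in coordinates. -/
lemma Wplus_iff (hd : 2 ≤ d) (x : Vd d) :
    x ∈ WplusDom d ↔ (betaB d x x = 1 ∧ x 1 * x 1 < x 2 * x 2 ∧ 0 < x 0 * x 2) := by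
  have hY := hmat_mulVec hd x
  set Y : Vd d := fun j => if j = 1 then x 2 else if j = 2 then x 1 else 0 with hYdef
  have hY0 : Y 0 = 0 := by
    rw [hYdef]
    exact (if_neg (zero_ne_one' hd)).trans (if_neg fun h => (two_ne_zero' hd) h.symm)
  have hY1 : Y 1 = x 2 := by rw [hYdef]; exact if_pos rfl
  have hY2 : Y 2 = x 1 := by
    rw [hYdef]
    exact (if_neg (two_ne_one' hd)).trans (if_pos rfl)
  have hYtail : ∀ j ∈ tailF d, j ≠ 2 → Y j = 0 := by
    intro j hj hj2
    rw [hYdef]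
    exact (if_neg (tail_ne1 hd hj)).trans (if_neg hj2)
  have hBxY : betaB d x Y = 0 := by
    rw [betaB_split hd, tip_two hd x Y hYtail, hY0, hY1, hY2]
    ring
  have hBYY : betaB d Y Y = x 2 * x 2 - x 1 * x 1 := by
    rw [betaB_split hd, tip_two hd Y Y hYtail, hY0, hY1, hY2]
    ring
  have hfv : fval x Y = x 0 * x 2 := by
    rw [fval, hY0, hY1]; ring
  constructor
  · rintro ⟨hA, hP⟩
    rw [hY] at hP
    have h := (posPair_iff hd x Y).1 hP
    rw [hBYY] at h
    rw [hfv] at h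
    exact ⟨h.1, by linarith [h.2.2.1], h.2.2.2⟩
  · rintro ⟨h1, h2, h3⟩
    refine ⟨h1, ?_⟩
    rw [hY]
    exact (posPair_iff hd x Y).2 ⟨h1, hBxY, by rw [hBYY]; linarith, by rw [hfv]; exact h3⟩

lemma stmt12_aux (hd : 2 ≤ d) : KMSdom d = WplusDom d := by
  ext x
  rw [Wplus_iff hd]
  constructor
  · rintro ⟨hA, hT⟩
    have hx : betaB d x x = 1 := hA
    have hhalf : (0:ℝ) < Real.pi / 2 := by positivity
    have hhalf2 : Real.pi / 2 < Real.pi := by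
      have := Real.pi_pos; linarith
    have hm := (alphaIt_mem_iff hd x hx hhalf hhalf2).1 (hT _ hhalf hhalf2)
    exact ⟨hx, hm.1, hm.2⟩
  · rintro ⟨h1, h2, h3⟩
    refine ⟨h1, fun t ht0 htpi => ?_⟩
    exact (alphaIt_mem_iff hd x h1 ht0 htpi).2 ⟨h2, h3⟩

end AdsAux


/-- The KMS wedge domain and the positivity domain on `AdS^d` coincide. -/
theorem stmt12 (d : ℕ) (hd : 2 ≤ d) : KMSdom d = WplusDom d := by
  exact AdsAux.stmt12_aux hd
end
end

section
/- The KMS wedge domain on anti-de Sitter space is the Wick rotation of the fixed point set of τ̄_h in the positive tube domain: regarding M ⊆ V ⊆ V_ℂ, one has W_M^{KMS}(h) = κ_h({z ∈ 𝒯_M⁺ : τ̄_h(z) = z}). -/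
noncomputable section

/-- The Wick rotation `κ_h(z₀,z₁,z₂,z₃,…) = (z₀, −iz₂, −iz₁, z₃, …)`,
written on pairs `(x,y)` representing `z = x + iy`. -/
def kappah (d : ℕ) (p : Vd d × Vd d) : Vd d × Vd d :=
  (fun j => if (j : ℕ) = 1 then p.2 2 else if (j : ℕ) = 2 then p.2 1 else p.1 j,
   fun j => if (j : ℕ) = 1 then -(p.1 2) else if (j : ℕ) = 2 then -(p.1 1) else p.2 j)

section Aux
variable {d : ℕ}

lemma betaB_comm (x y : Vd d) : betaB d x y = betaB d y x :=
  Finset.sum_congr rfl fun j _ => by ring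

lemma betaB_add_right (x y z : Vd d) : betaB d x (y + z) = betaB d x y + betaB d x z := by
  unfold betaB
  rw [← Finset.sum_add_distrib]
  exact Finset.sum_congr rfl fun j _ => by simp only [Pi.add_apply]; split <;> ring

lemma betaB_smul_right (c : ℝ) (x y : Vd d) : betaB d x (c • y) = c * betaB d x y := by
  unfold betaB
  rw [Finset.mul_sum]
  exact Finset.sum_congr rfl fun j _ => by simp only [Pi.smul_apply, smul_eq_mul]; split <;> ring

lemma betaB_smul_left (c : ℝ) (x y : Vd d) : betaB d (c • x) y = c * betaB d x y := by
  rw [betaB_comm, betaB_smul_right, betaB_comm]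

lemma betaB_add_left (x y z : Vd d) : betaB d (x + y) z = betaB d x z + betaB d y z := by
  rw [betaB_comm, betaB_add_right, betaB_comm, betaB_comm z y]

lemma Vplus_smul {v : Vd d} {c : ℝ} (hc : 0 < c) (hv : v ∈ Vplus d) : c • v ∈ Vplus d := by
  obtain ⟨h1, h2, h3⟩ := hv
  refine ⟨by rw [betaB_smul_right, h1, mul_zero], ?_, ?_⟩
  · rw [betaB_smul_left, betaB_smul_right]
    exact mul_pos hc (mul_pos hc h2)
  · rw [betaB_smul_left]
    exact mul_pos hc h3

lemma one_mem_Obeta : (1 : Mat d) ∈ Obeta d :=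
  ⟨isUnit_one, fun x y => by rw [Matrix.one_mulVec, Matrix.one_mulVec]⟩

lemma mul_mem_Obeta {g k : Mat d} (hg : g ∈ Obeta d) (hk : k ∈ Obeta d) : g * k ∈ Obeta d :=
  ⟨hg.1.mul hk.1, fun x y => by
    rw [← Matrix.mulVec_mulVec, ← Matrix.mulVec_mulVec, hg.2, hk.2]⟩

lemma Gset_subset_Obeta : Gset d ⊆ Obeta d := connectedComponentIn_subset _ _

lemma one_mem_Gset : (1 : Mat d) ∈ Gset d := mem_connectedComponentIn one_mem_Obeta

lemma Gset_mul {g k : Mat d} (hg : g ∈ Gset d) (hk : k ∈ Gset d) : g * k ∈ Gset d := by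
  have hcont : Continuous fun M : Mat d => g * M :=
    Continuous.matrix_mul continuous_const continuous_id
  have h1 : (fun M : Mat d => g * M) '' Gset d ⊆ connectedComponentIn (Obeta d) g := by
    apply IsPreconnected.subset_connectedComponentIn
    · exact isPreconnected_connectedComponentIn.image _ hcont.continuousOn
    · exact ⟨1, one_mem_Gset, mul_one g⟩
    · rintro _ ⟨M, hM, rfl⟩
      exact mul_mem_Obeta (Gset_subset_Obeta hg) (Gset_subset_Obeta hM)
  have h2 : g * k ∈ connectedComponentIn (Obeta d) g := h1 ⟨k, hk, rfl⟩
  rwa [Gset, connectedComponentIn_eq hg]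

lemma posPair_of_rel {X Y X' Y' : Vd d} {k : Mat d} {μ : ℝ} (hk : k ∈ Gset d)
    (hX : k.mulVec X' = X) (hY : k.mulVec Y' = μ • Y) (hμ : 0 < μ)
    (h : posPair d X Y) : posPair d X' Y' := by
  obtain ⟨g, hg, hgX, hgY⟩ := h
  refine ⟨g * k, Gset_mul hg hk, ?_, ?_⟩
  · rw [← Matrix.mulVec_mulVec, hX, hgX]
  · rw [← Matrix.mulVec_mulVec, hY, Matrix.mulVec_smul]
    exact Vplus_smul hμ hgY

end Aux
section Boost
variable {d : ℕ}

def etaf (d : ℕ) (j : Fin (d + 1)) : ℝ := if (j : ℕ) ≤ 1 then 1 else -1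

lemma betaB_eq (x y : Vd d) : betaB d x y = ∑ j, etaf d j * x j * y j := rfl

/-- rank ≤ 2 perturbation matrices for the boost in the plane spanned by `X, F`. -/
def pertA (d : ℕ) (X F : Vd d) : Mat d :=
  Matrix.of fun i j => etaf d j * (X i * X j - F i * F j)

def pertB (d : ℕ) (X F : Vd d) : Mat d :=
  Matrix.of fun i j => etaf d j * (F i * X j - X i * F j)

lemma pertA_mulVec (X F v : Vd d) :
    (pertA d X F).mulVec v = (betaB d X v) • X - (betaB d F v) • F := by
  funext i
  simp only [Matrix.mulVec, dotProduct, pertA, Matrix.of_apply, Pi.sub_apply,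
    Pi.smul_apply, smul_eq_mul]
  rw [betaB_eq, betaB_eq, Finset.sum_mul, Finset.sum_mul, ← Finset.sum_sub_distrib]
  exact Finset.sum_congr rfl fun j _ => by ring

lemma pertB_mulVec (X F v : Vd d) :
    (pertB d X F).mulVec v = (betaB d X v) • F - (betaB d F v) • X := by
  funext i
  simp only [Matrix.mulVec, dotProduct, pertB, Matrix.of_apply, Pi.sub_apply,
    Pi.smul_apply, smul_eq_mul]
  rw [betaB_eq, betaB_eq, Finset.sum_mul, Finset.sum_mul, ← Finset.sum_sub_distrib]
  exact Finset.sum_congr rfl fun j _ => by ring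

/-- The boost with parameter `θ` in the plane spanned by `X` (positive) and `F` (negative). -/
def Bmat (d : ℕ) (X F : Vd d) (θ : ℝ) : Mat d :=
  1 + (Real.cosh θ - 1) • pertA d X F + Real.sinh θ • pertB d X F

lemma Bmat_mulVec (X F v : Vd d) (θ : ℝ) :
    (Bmat d X F θ).mulVec v =
      v + ((Real.cosh θ - 1) * betaB d X v - Real.sinh θ * betaB d F v) • X
        + (Real.sinh θ * betaB d X v - (Real.cosh θ - 1) * betaB d F v) • F := by
  funext i
  simp only [Bmat, Matrix.add_mulVec, Matrix.smul_mulVec, Matrix.one_mulVec,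
    pertA_mulVec, pertB_mulVec, Pi.add_apply, Pi.smul_apply, Pi.sub_apply, smul_eq_mul]
  ring

variable {X F : Vd d} (hX : betaB d X X = 1) (hF : betaB d F F = -1) (hXF : betaB d X F = 0)

include hX hF hXF

lemma Bmat_beta (θ : ℝ) (v w : Vd d) :
    betaB d ((Bmat d X F θ).mulVec v) ((Bmat d X F θ).mulVec w) = betaB d v w := by
  have hFX : betaB d F X = 0 := by rw [betaB_comm]; exact hXF
  have hXv : betaB d v X = betaB d X v := betaB_comm _ _
  have hFv : betaB d v F = betaB d F v := betaB_comm _ _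
  rw [Bmat_mulVec, Bmat_mulVec]
  simp only [betaB_add_left, betaB_add_right, betaB_smul_left, betaB_smul_right,
    hX, hF, hXF, hFX, hXv, hFv]
  linear_combination (betaB d X v * betaB d X w - betaB d F v * betaB d F w) *
    Real.cosh_sq_sub_sinh_sq θ

lemma Bmat_left_inv (θ : ℝ) (v : Vd d) :
    (Bmat d X F (-θ)).mulVec ((Bmat d X F θ).mulVec v) = v := by
  have hFX : betaB d F X = 0 := by rw [betaB_comm]; exact hXF
  rw [Bmat_mulVec, Bmat_mulVec]
  simp only [betaB_add_right, betaB_smul_right, hX, hF, hXF, hFX, Real.cosh_neg, Real.sinh_neg]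
  funext i
  simp only [Pi.add_apply, Pi.smul_apply, smul_eq_mul]
  linear_combination (betaB d X v * X i - betaB d F v * F i) * Real.cosh_sq_sub_sinh_sq θ

lemma Bmat_mem_Obeta (θ : ℝ) : Bmat d X F θ ∈ Obeta d := by
  refine ⟨?_, fun v w => Bmat_beta hX hF hXF θ v w⟩
  apply Matrix.mulVec_injective_iff_isUnit.mp
  intro a b hab
  have := Bmat_left_inv hX hF hXF θ a
  rw [hab, Bmat_left_inv hX hF hXF θ b] at this
  exact this.symm

omit hX hF hXF in
lemma Bmat_zero : Bmat d X F 0 = 1 := by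
  simp [Bmat, Real.cosh_zero, Real.sinh_zero]

lemma Bmat_mem_Gset (θ : ℝ) : Bmat d X F θ ∈ Gset d := by
  have hcont : Continuous fun t : ℝ => Bmat d X F t := by
    unfold Bmat
    exact (continuous_const.add
      ((Real.continuous_cosh.sub continuous_const).smul continuous_const)).add
      (Real.continuous_sinh.smul continuous_const)
  have himg : (fun t : ℝ => Bmat d X F t) '' Set.univ ⊆ connectedComponentIn (Obeta d) 1 := by
    apply IsPreconnected.subset_connectedComponentIn
    · exact isPreconnected_univ.image _ hcont.continuousOn
    · exact ⟨0, trivial, Bmat_zero⟩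
    · rintro _ ⟨t, -, rfl⟩
      exact Bmat_mem_Obeta hX hF hXF t
  exact himg ⟨θ, trivial, rfl⟩

end Boost
section Indices
variable {d : ℕ}

lemma val1 (hd : 2 ≤ d) : ((1 : Fin (d + 1)) : ℕ) = 1 := by
  rw [Fin.val_one', Nat.mod_eq_of_lt (by omega)]

lemma val2 (hd : 2 ≤ d) : ((2 : Fin (d + 1)) : ℕ) = 2 := by
  have : ((2 : Fin (d + 1)) : ℕ) = 2 % (d + 1) := rfl
  rw [this, Nat.mod_eq_of_lt (by omega)]

lemma finEq1 (hd : 2 ≤ d) {j : Fin (d + 1)} (h : (j : ℕ) = 1) : j = 1 :=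
  Fin.ext (by rw [h, val1 hd])

lemma finEq2 (hd : 2 ≤ d) {j : Fin (d + 1)} (h : (j : ℕ) = 2) : j = 2 :=
  Fin.ext (by rw [h, val2 hd])

lemma sum_twoSupport (hd : 2 ≤ d) (f : Fin (d + 1) → ℝ)
    (h : ∀ j : Fin (d + 1), (j : ℕ) ≠ 1 → (j : ℕ) ≠ 2 → f j = 0) :
    ∑ j, f j = f 1 + f 2 := by
  have h12 : (1 : Fin (d + 1)) ≠ 2 := by
    intro he
    have := congrArg (Fin.val) he
    rw [val1 hd, val2 hd] at this
    omega
  rw [← Finset.sum_subset (Finset.subset_univ ({1, 2} : Finset (Fin (d + 1))))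
    (fun j _ hj => h j
      (fun h1 => hj (by simp [finEq1 hd h1]))
      (fun h2 => hj (by simp [finEq2 hd h2])))]
  rw [Finset.sum_pair h12]

lemma betaB_right_supp (hd : 2 ≤ d) (z y : Vd d)
    (hy : ∀ j : Fin (d + 1), (j : ℕ) ≠ 1 → (j : ℕ) ≠ 2 → y j = 0) :
    betaB d z y = z 1 * y 1 - z 2 * y 2 := by
  unfold betaB
  rw [sum_twoSupport hd _ (fun j h1 h2 => by rw [hy j h1 h2, mul_zero])]
  rw [val1 hd, val2 hd]
  norm_num
  ring

/-- The vector `a e₁ + b e₂`. -/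
def E12 (d : ℕ) (a b : ℝ) : Vd d := fun j =>
  if (j : ℕ) = 1 then a else if (j : ℕ) = 2 then b else 0

lemma E12_supp (a b : ℝ) : ∀ j : Fin (d + 1), (j : ℕ) ≠ 1 → (j : ℕ) ≠ 2 → E12 d a b j = 0 :=
  fun j h1 h2 => by simp [E12, h1, h2]

lemma E12_one (hd : 2 ≤ d) (a b : ℝ) : E12 d a b 1 = a := by
  unfold E12; rw [val1 hd]; norm_num

lemma E12_two (hd : 2 ≤ d) (a b : ℝ) : E12 d a b 2 = b := by
  unfold E12; rw [val2 hd]; norm_num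

lemma betaB_E12_right (hd : 2 ≤ d) (z : Vd d) (a b : ℝ) :
    betaB d z (E12 d a b) = z 1 * a - z 2 * b := by
  rw [betaB_right_supp hd _ _ (E12_supp a b), E12_one hd, E12_two hd]

end Indices
section Key
variable {d : ℕ}

set_option maxHeartbeats 1000000 in
lemma key (hd : 2 ≤ d) {Xt Y : Vd d}
    (hX1 : Xt 1 = 0) (hX2 : Xt 2 = 0)
    (hYsupp : ∀ j : Fin (d + 1), (j : ℕ) ≠ 1 → (j : ℕ) ≠ 2 → Y j = 0)
    (hp : (Xt, Y) ∈ TubePlus d) {t : ℝ} (ht0 : 0 < t) (htpi : t < Real.pi) :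
    (Xt + Real.cos t • E12 d (Y 2) (Y 1), Real.sin t • Y) ∈ TubePlus d := by
  obtain ⟨⟨h1, h2, h3⟩, hpos⟩ := hp
  simp only at h1 h2 h3 hpos
  set a := Y 1 with ha
  set b := Y 2 with hb
  set c := Real.cos t with hc
  set sn := Real.sin t with hsn
  set F0 : Vd d := E12 d b a with hF0
  have hYY : betaB d Y Y = a * a - b * b := betaB_right_supp hd Y Y hYsupp
  have hBF0F0 : betaB d F0 F0 = b * b - a * a := by
    rw [hF0, betaB_E12_right hd, E12_one hd, E12_two hd]
  have hBXF0 : betaB d Xt F0 = 0 := by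
    rw [hF0, betaB_E12_right hd, hX1, hX2]; ring
  have hBXY : betaB d Xt Y = 0 := by
    rw [betaB_right_supp hd Xt Y hYsupp, hX1, hX2]; ring
  have hBF0Y : betaB d F0 Y = 0 := by
    rw [betaB_right_supp hd F0 Y hYsupp, hF0, E12_one hd, E12_two hd]; ring
  have hBF0X : betaB d F0 Xt = 0 := by rw [betaB_comm]; exact hBXF0
  have hBYF0 : betaB d Y F0 = 0 := by rw [betaB_comm]; exact hBF0Y
  have hBYX : betaB d Y Xt = 0 := by rw [betaB_comm]; exact hBXY
  have hApos : 0 < a * a - b * b := by rw [hYY] at h3; exact h3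
  have hXXval : betaB d Xt Xt = 1 + (a * a - b * b) := by rw [hYY] at h1; linarith
  have hsnpos : 0 < sn := Real.sin_pos_of_pos_of_lt_pi ht0 htpi
  have hcs : c ^ 2 + sn ^ 2 = 1 := by rw [hc, hsn]; exact Real.cos_sq_add_sin_sq t
  set u : Vd d := Xt + c • F0 with hu
  set v : Vd d := sn • Y with hv
  have hBuu : betaB d u u = 1 + sn ^ 2 * (a * a - b * b) := by
    rw [hu]
    simp only [betaB_add_left, betaB_add_right, betaB_smul_left, betaB_smul_right,
      hBXF0, hBF0X, hBF0F0, hXXval]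
    linear_combination (-(a * a - b * b)) * hcs
  have hBuv : betaB d u v = 0 := by
    rw [hu, hv]
    simp only [betaB_add_left, betaB_smul_left, betaB_smul_right, hBXY, hBF0Y]
    ring
  have hBvv : betaB d v v = sn ^ 2 * (a * a - b * b) := by
    rw [hv]
    simp only [betaB_smul_left, betaB_smul_right, hYY]
    ring
  have hBvvpos : 0 < betaB d v v := by
    rw [hBvv]; exact mul_pos (pow_pos hsnpos 2) hApos
  refine ⟨⟨?_, ?_, ?_⟩, ?_⟩
  · simp only [hBuu, hBvv]; ring
  · exact hBuv
  · exact hBvvpos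
  -- positivity part
  set r := Real.sqrt (betaB d Xt Xt) with hr
  have hrr : r * r = 1 + (a * a - b * b) := by
    rw [hr, Real.mul_self_sqrt (by rw [hXXval]; linarith), hXXval]
  have hrpos : 0 < r := Real.sqrt_pos.mpr (by rw [hXXval]; linarith)
  set s := Real.sqrt (a * a - b * b) with hs
  have hss : s * s = a * a - b * b := Real.mul_self_sqrt (le_of_lt hApos)
  have hspos : 0 < s := Real.sqrt_pos.mpr hApos
  set rho := Real.sqrt (betaB d u u) with hrho
  have hrhorho : rho * rho = 1 + sn ^ 2 * (a * a - b * b) := by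
    rw [hrho, Real.mul_self_sqrt (by rw [hBuu]; nlinarith), hBuu]
  have hrhopos : 0 < rho := Real.sqrt_pos.mpr (by rw [hBuu]; nlinarith)
  have hrho2 : rho * rho = r * r - c * c * (s * s) := by
    rw [hrhorho, hrr, hss]; linear_combination (a * a - b * b) * hcs
  -- the boost
  set Xhat : Vd d := r⁻¹ • Xt with hXh
  set Fn : Vd d := s⁻¹ • F0 with hFn
  have hXhXh : betaB d Xhat Xhat = 1 := by
    rw [hXh, betaB_smul_left, betaB_smul_right, hXXval, ← hrr]
    field_simp
  have hFnFn : betaB d Fn Fn = -1 := by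
    rw [hFn, betaB_smul_left, betaB_smul_right, hBF0F0]
    rw [show b * b - a * a = -(s * s) from by rw [hss]; ring]
    field_simp
  have hXhFn : betaB d Xhat Fn = 0 := by
    rw [hXh, hFn, betaB_smul_left, betaB_smul_right, hBXF0]; ring
  set th := Real.arsinh (-(c * s) / rho) with hth
  have hsinh : Real.sinh th = -(c * s) / rho := Real.sinh_arsinh _
  have hcosh : Real.cosh th = r / rho := by
    rw [hth, Real.cosh_arsinh]
    rw [show 1 + (-(c * s) / rho) ^ 2 = (r / rho) ^ 2 from by
      field_simp
      linear_combination hrho2]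
    exact Real.sqrt_sq (by positivity)
  have hBXhu : betaB d Xhat u = r⁻¹ * (1 + (a * a - b * b)) := by
    rw [hXh, hu, betaB_smul_left, betaB_add_right, betaB_smul_right, hXXval, hBXF0]
    ring
  have hBFnu : betaB d Fn u = s⁻¹ * (c * (b * b - a * a)) := by
    rw [hFn, hu, betaB_smul_left, betaB_add_right, betaB_smul_right, hBF0X, hBF0F0]
    ring
  have hBXhv : betaB d Xhat v = 0 := by
    rw [hXh, hv, betaB_smul_left, betaB_smul_right, hBXY]; ring
  have hBFnv : betaB d Fn v = 0 := by
    rw [hFn, hv, betaB_smul_left, betaB_smul_right, hBF0Y]; ring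
  have hcomb : u + (rho - r) • Xhat + (-(c * s)) • Fn = rho • Xhat := by
    funext i
    rw [hu, hXh, hFn]
    simp only [Pi.add_apply, Pi.smul_apply, smul_eq_mul]
    field_simp
    ring
  have e1 : r⁻¹ * (1 + (a * a - b * b)) = r := by
    rw [← hrr]; field_simp
  have e2 : s⁻¹ * (c * (b * b - a * a)) = -(c * s) := by
    rw [show b * b - a * a = -(s * s) from by rw [hss]; ring]
    field_simp
  have hk_u : (Bmat d Xhat Fn th).mulVec u = rho • Xhat := by
    rw [Bmat_mulVec, hBXhu, hBFnu, hcosh, hsinh, e1, e2, ← hcomb]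
    congr 2
    · congr 1
      field_simp
      linear_combination -hrho2
    · congr 1
      field_simp
      ring
  have hk_v : (Bmat d Xhat Fn th).mulVec v = v := by
    rw [Bmat_mulVec, hBXhv, hBFnv]
    funext i
    simp only [Pi.add_apply, Pi.smul_apply, smul_eq_mul]
    ring
  -- conclude
  have hkG : Bmat d Xhat Fn th ∈ Gset d := Bmat_mem_Gset hXhXh hFnFn hXhFn th
  apply posPair_of_rel (μ := r * sn / rho) hkG ?_ ?_ (by positivity) hpos
  · rw [Matrix.mulVec_smul, hk_u]
    rw [hXh]
    funext i
    simp only [Pi.smul_apply, smul_eq_mul]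
    field_simp
  · rw [Matrix.mulVec_smul, hk_v, hv]
    funext i
    simp only [Pi.smul_apply, smul_eq_mul]
    field_simp

end Key
set_option maxHeartbeats 1000000 in
/-- `W_M^{KMS}(h) = κ_h((𝒯_M⁺)^{τ̄_h})`, where `M ⊆ V ⊆ V_ℂ`
(a real point `x` is the pair `(x,0)`). -/
theorem stmt13 (d : ℕ) (hd : 2 ≤ d) :
    (fun x : Vd d => (x, (0 : Vd d))) '' KMSdom d =
      kappah d ''
        {p ∈ TubePlus d | (tauh d).mulVec p.1 = p.1 ∧ (tauh d).mulVec p.2 = -p.2} := by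
  apply Set.Subset.antisymm
  · -- forward inclusion
    rintro _ ⟨x, ⟨hAdS, hall⟩, rfl⟩
    have h0 : (0 : ℝ) < Real.pi / 2 := by linarith [Real.pi_pos]
    have hlt : Real.pi / 2 < Real.pi := by linarith [Real.pi_pos]
    have hp := hall (Real.pi / 2) h0 hlt
    refine ⟨alphaIt d (Real.pi / 2) x, ⟨hp, ?_, ?_⟩, ?_⟩
    · -- tauh fixes the real part
      funext j
      rw [tauh, Matrix.mulVec_diagonal]
      by_cases hj : (j : ℕ) = 1 ∨ (j : ℕ) = 2
      · simp [alphaIt, hj, Real.cos_pi_div_two]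
      · simp [alphaIt, hj]
    · -- tauh negates the imaginary part
      funext j
      rw [tauh, Matrix.mulVec_diagonal]
      by_cases h1 : (j : ℕ) = 1
      · simp [alphaIt, h1]
      · by_cases h2 : (j : ℕ) = 2
        · simp [alphaIt, h1, h2]
        · simp [alphaIt, h1, h2]
    · -- kappah brings it back to (x, 0)
      show kappah d (alphaIt d (Real.pi / 2) x) = (x, 0)
      unfold kappah alphaIt
      rw [Real.cos_pi_div_two, Real.sin_pi_div_two]
      refine Prod.ext ?_ ?_ <;> funext j <;> simp only
      · by_cases h1 : (j : ℕ) = 1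
        · rw [if_pos h1, finEq1 hd h1, val2 hd]
          norm_num
        · rw [if_neg h1]
          by_cases h2 : (j : ℕ) = 2
          · rw [if_pos h2, finEq2 hd h2, val1 hd]
            norm_num
          · rw [if_neg h2, if_neg (by tauto : ¬((j : ℕ) = 1 ∨ (j : ℕ) = 2))]
      · by_cases h1 : (j : ℕ) = 1
        · rw [if_pos h1, val2 hd]
          norm_num
        · rw [if_neg h1]
          by_cases h2 : (j : ℕ) = 2
          · rw [if_pos h2, val1 hd]
            norm_num
          · simp only [if_neg h1, if_neg h2]
            rfl
  · -- backward inclusion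
    rintro _ ⟨p, ⟨hpT, ht1, ht2⟩, rfl⟩
    have hX1 : p.1 1 = 0 := by
      have h := congrFun ht1 1
      rw [tauh, Matrix.mulVec_diagonal, val1 hd] at h
      norm_num at h
      linarith
    have hX2 : p.1 2 = 0 := by
      have h := congrFun ht1 2
      rw [tauh, Matrix.mulVec_diagonal, val2 hd] at h
      norm_num at h
      linarith
    have hYsupp : ∀ j : Fin (d + 1), (j : ℕ) ≠ 1 → (j : ℕ) ≠ 2 → p.2 j = 0 := by
      intro j h1 h2
      have h := congrFun ht2 j
      rw [tauh, Matrix.mulVec_diagonal] at h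
      simp only [h1, h2, or_self, if_false, Pi.neg_apply, one_mul] at h
      · linarith
    set x : Vd d := fun j =>
      if (j : ℕ) = 1 then p.2 2 else if (j : ℕ) = 2 then p.2 1 else p.1 j with hx
    have hkp : kappah d p = (x, 0) := by
      unfold kappah
      refine Prod.ext rfl ?_
      funext j
      simp only
      by_cases h1 : (j : ℕ) = 1
      · rw [if_pos h1, hX2]
        simp
      · rw [if_neg h1]
        by_cases h2 : (j : ℕ) = 2
        · rw [if_pos h2, hX1]
          simp
        · rw [if_neg h2, hYsupp j h1 h2]
          rfl
    obtain ⟨⟨hs1, hs2, hs3⟩, hppos⟩ := hpT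
    have hxAdS : betaB d x x = 1 := by
      have hxdec : x = p.1 + E12 d (p.2 2) (p.2 1) := by
        funext j
        rw [hx]
        simp only [Pi.add_apply, E12]
        by_cases h1 : (j : ℕ) = 1
        · rw [if_pos h1, if_pos h1, finEq1 hd h1, hX1]
          ring
        · rw [if_neg h1, if_neg h1]
          by_cases h2 : (j : ℕ) = 2
          · rw [if_pos h2, if_pos h2, finEq2 hd h2, hX2]
            ring
          · rw [if_neg h2, if_neg h2]
            ring
      have hP2 : betaB d p.2 p.2 = p.2 1 * p.2 1 - p.2 2 * p.2 2 :=
        betaB_right_supp hd _ _ hYsupp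
      have hPE : betaB d p.1 (E12 d (p.2 2) (p.2 1)) = 0 := by
        rw [betaB_E12_right hd, hX1, hX2]; ring
      have hEP : betaB d (E12 d (p.2 2) (p.2 1)) p.1 = 0 := by
        rw [betaB_comm]; exact hPE
      have hEE : betaB d (E12 d (p.2 2) (p.2 1)) (E12 d (p.2 2) (p.2 1)) =
          p.2 2 * p.2 2 - p.2 1 * p.2 1 := by
        rw [betaB_E12_right hd, E12_one hd, E12_two hd]
      rw [hxdec, betaB_add_left, betaB_add_right, betaB_add_right, hPE, hEP, hEE]
      rw [hP2] at hs1
      linarith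
    refine ⟨x, ⟨hxAdS, ?_⟩, hkp.symm⟩
    intro t ht0 htpi
    have hkey := key hd hX1 hX2 hYsupp ⟨⟨hs1, hs2, hs3⟩, hppos⟩ ht0 htpi
    have halpha : alphaIt d t x =
        (p.1 + Real.cos t • E12 d (p.2 2) (p.2 1), Real.sin t • p.2) := by
      unfold alphaIt
      refine Prod.ext ?_ ?_ <;> funext j <;>
        simp only [Pi.add_apply, Pi.smul_apply, smul_eq_mul, E12, hx]
      · by_cases h1 : (j : ℕ) = 1
        · rw [if_pos (Or.inl h1), if_pos h1, if_pos h1, finEq1 hd h1, hX1]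
          ring
        · by_cases h2 : (j : ℕ) = 2
          · rw [if_pos (Or.inr h2), if_neg h1, if_neg h1, if_pos h2, if_pos h2,
              finEq2 hd h2, hX2]
            ring
          · rw [if_neg (by tauto : ¬((j : ℕ) = 1 ∨ (j : ℕ) = 2)), if_neg h1, if_neg h1,
              if_neg h2, if_neg h2]
            ring
      · by_cases h1 : (j : ℕ) = 1
        · rw [if_pos h1, finEq1 hd h1, val2 hd]
          norm_num
        · rw [if_neg h1]
          by_cases h2 : (j : ℕ) = 2
          · rw [if_pos h2, finEq2 hd h2, val1 hd]
            norm_num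
          · rw [if_neg h2, hYsupp j h1 h2]
            ring
    exact halpha ▸ hkey
end
end

section
/- Assume d ≥ 3, and let M^α = {x ∈ M : x₁ = 0 and x₂ = 0} be the fixed point set of the modular flow e^{th} on anti-de Sitter space. Then G^h acts transitively on M^α: for all x, y ∈ M^α there exists g ∈ G^h with g·x = y. -/
noncomputable section

namespace S15
open Matrix Finset

variable {d : ℕ}

def eps (d : ℕ) (j : Fin (d+1)) : ℝ := if (j : ℕ) ≤ 1 then 1 else -1

lemma betaB_def (x y : Vd d) : betaB d x y = ∑ j, eps d j * x j * y j := rfl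

lemma betaB_comm (x y : Vd d) : betaB d x y = betaB d y x :=
  Finset.sum_congr rfl fun j _ => by ring

lemma sum_two {p q : Fin (d+1)} (hpq : p ≠ q) (f : Fin (d+1) → ℝ)
    (hf : ∀ j, j ≠ p → j ≠ q → f j = 0) : ∑ j, f j = f p + f q := by
  rw [← Finset.sum_subset (Finset.subset_univ {p, q})]
  · rw [Finset.sum_pair hpq]
  · intro j _ hj
    simp only [Finset.mem_insert, Finset.mem_singleton, not_or] at hj
    exact hf j hj.1 hj.2

lemma betaB_comb (v v' w b : Vd d) (α γ α' γ' : ℝ) :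
    betaB d (fun i => v i + α * w i + γ * b i) (fun i => v' i + α' * w i + γ' * b i)
    = betaB d v v' + α' * betaB d v w + γ' * betaB d v b
      + α * betaB d w v' + α*α'* betaB d w w + α*γ'* betaB d w b
      + γ * betaB d b v' + γ*α'* betaB d b w + γ*γ'* betaB d b b := by
  simp only [betaB_def, Finset.mul_sum, ← Finset.sum_add_distrib]
  exact Finset.sum_congr rfl fun j _ => by ring

lemma betaB_right_comb (z v w b : Vd d) (α γ : ℝ) :
    betaB d z (fun i => v i + α * w i + γ * b i)
    = betaB d z v + α * betaB d z w + γ * betaB d z b := by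
  simp only [betaB_def, Finset.mul_sum, ← Finset.sum_add_distrib]
  exact Finset.sum_congr rfl fun j _ => by ring

lemma betaB_add_left (x y z : Vd d) :
    betaB d (fun j => x j + y j) z = betaB d x z + betaB d y z := by
  simp only [betaB_def, ← Finset.sum_add_distrib]
  exact Finset.sum_congr rfl fun j _ => by ring

lemma betaB_smul_left (c : ℝ) (x y : Vd d) :
    betaB d (fun j => c * x j) y = c * betaB d x y := by
  simp only [betaB_def, Finset.mul_sum]
  exact Finset.sum_congr rfl fun j _ => by ring

lemma betaB_smul_right (c : ℝ) (x y : Vd d) :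
    betaB d x (fun j => c * y j) = c * betaB d x y := by
  simp only [betaB_def, Finset.mul_sum]
  exact Finset.sum_congr rfl fun j _ => by ring

lemma betaB_add_right (z x y : Vd d) :
    betaB d z (fun j => x j + y j) = betaB d z x + betaB d z y := by
  simp only [betaB_def, ← Finset.sum_add_distrib]
  exact Finset.sum_congr rfl fun j _ => by ring

lemma betaB_e0_left (v : Vd d) : betaB d (evec d 0) v = v 0 := by
  rw [betaB_def]
  rw [Finset.sum_eq_single 0]
  · simp [evec, eps]
  · intro j _ hj; simp [evec, hj]
  · intro h; exact absurd (Finset.mem_univ _) h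

def Gmat (d : ℕ) (a b : Vd d) : Mat d := Matrix.of fun i j =>
  (if i = j then (1:ℝ) else 0) - eps d j * (a i + b i) * (a j + b j) / (1 + betaB d a b)
    + 2 * eps d j * b i * a j

lemma Gmat_mulVec (a b v : Vd d) : (Gmat d a b).mulVec v =
    fun i => v i + (-(betaB d (fun j => a j + b j) v / (1 + betaB d a b))) * (a i + b i)
      + (2 * betaB d a v) * b i := by
  have hw : betaB d (fun j => a j + b j) v = ∑ j, eps d j * (a j + b j) * v j := rfl
  have ha : betaB d a v = ∑ j, eps d j * a j * v j := rfl
  funext i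
  simp only [Gmat, Matrix.mulVec, Matrix.of_apply, dotProduct, hw, ha]
  have this1 : ∀ j : Fin (d+1),
      ((if i = j then (1:ℝ) else 0) - eps d j * (a i + b i) * (a j + b j) / (1 + betaB d a b)
        + 2 * eps d j * b i * a j) * v j
      = (if i = j then v j else 0)
        + (-((a i + b i) / (1 + betaB d a b))) * (eps d j * (a j + b j) * v j)
        + (2 * b i) * (eps d j * a j * v j) := by
    intro j
    by_cases h : i = j <;> simp [h] <;> ring
  rw [Finset.sum_congr rfl fun j _ => this1 j, Finset.sum_add_distrib, Finset.sum_add_distrib,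
    Finset.sum_ite_eq, ← Finset.mul_sum, ← Finset.mul_sum]
  simp only [Finset.mem_univ, if_true]
  ring

lemma mat_ext {A B : Mat d} (h : ∀ v, A.mulVec v = B.mulVec v) : A = B := by
  ext i j
  have := congrFun (h (Pi.single j 1)) i
  simpa using this

set_option linter.unusedSectionVars false

section props
variable {a b : Vd d} (ha : betaB d a a = 1) (hb : betaB d b b = 1)
  (hne : 1 + betaB d a b ≠ 0)

include ha hb hne

lemma Gmat_maps : (Gmat d a b).mulVec a = b := by
  rw [Gmat_mulVec]
  funext i
  rw [betaB_add_left, betaB_comm b a, ha]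
  field_simp
  ring

lemma Gmat_preserves (v v' : Vd d) :
    betaB d ((Gmat d a b).mulVec v) ((Gmat d a b).mulVec v') = betaB d v v' := by
  rw [Gmat_mulVec, Gmat_mulVec]
  simp only [betaB_add_left, betaB_add_right, betaB_smul_left, betaB_smul_right, ha, hb]
  simp only [betaB_comm b a, betaB_comm v a, betaB_comm v b, betaB_comm v' a, betaB_comm v' b,
    betaB_comm v' v]
  field_simp
  ring

lemma Gmat_inv : Gmat d b a * Gmat d a b = 1 := by
  apply mat_ext
  intro v
  rw [one_mulVec, ← Matrix.mulVec_mulVec, Gmat_mulVec a b v, Gmat_mulVec b a]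
  funext i
  simp only [betaB_right_comb, betaB_add_left, betaB_add_right, ha, hb]
  simp only [betaB_comm b a]
  field_simp
  ring

lemma Gmat_isUnit : IsUnit (Gmat d a b) := by
  have h1 := Gmat_inv ha hb hne
  exact ⟨⟨Gmat d a b, Gmat d b a, mul_eq_one_comm.mp h1, h1⟩, rfl⟩

lemma Gmat_mem_Obeta : Gmat d a b ∈ Obeta d :=
  ⟨Gmat_isUnit ha hb hne, Gmat_preserves ha hb hne⟩

end props

lemma Gmat_self {a : Vd d} (ha : betaB d a a = 1) : Gmat d a a = 1 := by
  apply mat_ext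
  intro v
  rw [one_mulVec, Gmat_mulVec]
  funext i
  rw [betaB_add_left, ha, betaB_comm]
  have : (1:ℝ) + 1 ≠ 0 := by norm_num
  field_simp
  ring

end S15

namespace S15
open Matrix Finset
variable {d : ℕ}

lemma Obeta_mul {g g' : Mat d} (hg : g ∈ Obeta d) (hg' : g' ∈ Obeta d) :
    g * g' ∈ Obeta d := by
  refine ⟨hg.1.mul hg'.1, fun x y => ?_⟩
  rw [← Matrix.mulVec_mulVec, ← Matrix.mulVec_mulVec, hg.2, hg'.2]

def rot (d : ℕ) (p q : Fin (d+1)) (θ : ℝ) : Mat d := Matrix.of fun i j =>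
  if i = p ∧ j = p then Real.cos θ else if i = p ∧ j = q then -Real.sin θ
  else if i = q ∧ j = p then Real.sin θ else if i = q ∧ j = q then Real.cos θ
  else if i = j then 1 else 0

lemma rot_mulVec {p q : Fin (d+1)} (hpq : p ≠ q) (θ : ℝ) (v : Vd d) :
    (rot d p q θ).mulVec v = fun i =>
      if i = p then Real.cos θ * v p - Real.sin θ * v q
      else if i = q then Real.sin θ * v p + Real.cos θ * v q else v i := by
  funext i
  simp only [rot, Matrix.mulVec, Matrix.of_apply, dotProduct]
  by_cases hip : i = p
  · rw [sum_two hpq]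
    · simp [hip, hpq, Ne.symm hpq]
      try ring
    · intro j hjp hjq
      simp [hip, Ne.symm hjp, Ne.symm hjq, hjp, hjq]
  · by_cases hiq : i = q
    · rw [sum_two hpq]
      · simp [hiq, hpq, Ne.symm hpq]
        try ring
      · intro j hjp hjq
        simp [hiq, Ne.symm hpq, hjp, hjq, Ne.symm hjq]
    · rw [Finset.sum_eq_single i]
      · simp [hip, hiq]
      · intro j _ hj
        simp only [hip, hiq, if_false, reduceIte]
        split_ifs <;> simp_all
      · intro h; exact absurd (Finset.mem_univ _) h

lemma rot_preserves {p q : Fin (d+1)} (hpq : p ≠ q) (he : eps d p = eps d q) (θ : ℝ)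
    (v v' : Vd d) :
    betaB d ((rot d p q θ).mulVec v) ((rot d p q θ).mulVec v') = betaB d v v' := by
  rw [rot_mulVec hpq, rot_mulVec hpq, betaB_def, betaB_def, ← sub_eq_zero,
    ← Finset.sum_sub_distrib]
  rw [sum_two hpq]
  · simp only [if_pos rfl, hpq, Ne.symm hpq, if_neg, ite_true, ite_false, if_false,
      reduceIte]
    rw [← he]
    linear_combination (eps d p * (v p * v' p + v q * v' q)) * (Real.sin_sq_add_cos_sq θ)
  · intro j hjp hjq
    simp [hjp, hjq]

lemma rot_mul_rot_neg {p q : Fin (d+1)} (hpq : p ≠ q) (θ : ℝ) :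
    rot d p q θ * rot d p q (-θ) = 1 := by
  apply mat_ext
  intro v
  rw [one_mulVec, ← Matrix.mulVec_mulVec, rot_mulVec hpq, rot_mulVec hpq]
  funext i
  by_cases hip : i = p
  · simp only [hip, if_pos rfl, hpq, Ne.symm hpq, reduceIte, Real.cos_neg, Real.sin_neg]
    simp [hpq, Ne.symm hpq]
    linear_combination (v p) * (Real.sin_sq_add_cos_sq θ)
  · by_cases hiq : i = q
    · simp only [hiq, Ne.symm hpq, if_neg, reduceIte, Real.cos_neg, Real.sin_neg]
      simp [hpq, Ne.symm hpq]
      linear_combination (v q) * (Real.sin_sq_add_cos_sq θ)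
    · simp [hip, hiq]

lemma rot_mem_Obeta {p q : Fin (d+1)} (hpq : p ≠ q) (he : eps d p = eps d q) (θ : ℝ) :
    rot d p q θ ∈ Obeta d := by
  refine ⟨?_, rot_preserves hpq he θ⟩
  have h1 := rot_mul_rot_neg hpq θ
  have h2 := rot_mul_rot_neg hpq (-θ)
  rw [neg_neg] at h2
  exact ⟨⟨rot d p q θ, rot d p q (-θ), h1, h2⟩, rfl⟩

lemma rot_zero {p q : Fin (d+1)} (hpq : p ≠ q) : rot d p q 0 = 1 := by
  apply mat_ext
  intro v
  rw [one_mulVec, rot_mulVec hpq]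
  funext i
  split_ifs with h1 h2 <;> simp [h1] <;> simp [h2]

def rmat (d : ℕ) : Mat d := Matrix.diagonal fun j : Fin (d+1) => if (j:ℕ) ≤ 3 then (-1:ℝ) else 1

lemma rmat_mulVec (v : Vd d) :
    (rmat d).mulVec v = fun i : Fin (d+1) => (if (i:ℕ) ≤ 3 then (-1:ℝ) else 1) * v i := by
  funext i; exact Matrix.mulVec_diagonal _ _ _

end S15

namespace S15
open Matrix Finset
variable {d : ℕ}

section idx
variable (hd : 3 ≤ d)
include hd

lemma val1 : ((1 : Fin (d+1)) : ℕ) = 1 := by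
  have h : ((1 : Fin (d+1)) : ℕ) = 1 % (d+1) := rfl
  rw [h, Nat.mod_eq_of_lt (by omega)]

lemma val2 : ((2 : Fin (d+1)) : ℕ) = 2 := by
  have h : ((2 : Fin (d+1)) : ℕ) = 2 % (d+1) := rfl
  rw [h, Nat.mod_eq_of_lt (by omega)]

lemma val3 : ((3 : Fin (d+1)) : ℕ) = 3 := by
  have h : ((3 : Fin (d+1)) : ℕ) = 3 % (d+1) := rfl
  rw [h, Nat.mod_eq_of_lt (by omega)]

lemma ne01 : (0 : Fin (d+1)) ≠ 1 := by
  intro h; have := congrArg Fin.val h; rw [val1 hd] at this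
  exact absurd this (by norm_num [show ((0 : Fin (d+1)) : ℕ) = 0 from rfl])
lemma ne02 : (0 : Fin (d+1)) ≠ 2 := by
  intro h; have := congrArg Fin.val h; rw [val2 hd] at this
  exact absurd this (by norm_num [show ((0 : Fin (d+1)) : ℕ) = 0 from rfl])
lemma ne03 : (0 : Fin (d+1)) ≠ 3 := by
  intro h; have := congrArg Fin.val h; rw [val3 hd] at this
  exact absurd this (by norm_num [show ((0 : Fin (d+1)) : ℕ) = 0 from rfl])
lemma ne12 : (1 : Fin (d+1)) ≠ 2 := by
  intro h; have := congrArg Fin.val h; rw [val1 hd, val2 hd] at this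
  exact absurd this (by norm_num)
lemma ne13 : (1 : Fin (d+1)) ≠ 3 := by
  intro h; have := congrArg Fin.val h; rw [val1 hd, val3 hd] at this
  exact absurd this (by norm_num)
lemma ne23 : (2 : Fin (d+1)) ≠ 3 := by
  intro h; have := congrArg Fin.val h; rw [val2 hd, val3 hd] at this
  exact absurd this (by norm_num)

lemma eq_of_val0 {i : Fin (d+1)} (h : (i:ℕ) = 0) : i = 0 := Fin.ext (by rw [h]; rfl)
lemma eq_of_val1 {i : Fin (d+1)} (h : (i:ℕ) = 1) : i = 1 := Fin.ext (by rw [h, val1 hd])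
lemma eq_of_val2 {i : Fin (d+1)} (h : (i:ℕ) = 2) : i = 2 := Fin.ext (by rw [h, val2 hd])
lemma eq_of_val3 {i : Fin (d+1)} (h : (i:ℕ) = 3) : i = 3 := Fin.ext (by rw [h, val3 hd])

lemma eps01 : eps d 0 = eps d 1 := by
  unfold eps
  have h0 : ((0 : Fin (d+1)) : ℕ) = 0 := rfl
  rw [h0, val1 hd]
  norm_num

lemma eps23 : eps d 2 = eps d 3 := by
  unfold eps
  rw [val2 hd, val3 hd]
  norm_num

lemma rmat_eq : rot d 0 1 Real.pi * rot d 2 3 Real.pi = rmat d := by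
  have V0 : ((0 : Fin (d+1)) : ℕ) = 0 := rfl
  have V1 := val1 hd; have V2 := val2 hd; have V3 := val3 hd
  have hm1 : 1 % (d+1) = 1 := Nat.mod_eq_of_lt (by omega)
  have hm2 : 2 % (d+1) = 2 := Nat.mod_eq_of_lt (by omega)
  have hm3 : 3 % (d+1) = 3 := Nat.mod_eq_of_lt (by omega)
  apply mat_ext
  intro v
  rw [← Matrix.mulVec_mulVec, rot_mulVec (ne23 hd), rot_mulVec (ne01 hd), rmat_mulVec]
  funext i
  simp only [Real.cos_pi, Real.sin_pi]
  by_cases h0 : i = 0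
  · subst h0
    simp [ne01 hd, ne02 hd, ne03 hd, V0, hm1, hm2, hm3]
  · by_cases h1 : i = 1
    · subst h1
      simp [Ne.symm (ne01 hd), ne12 hd, ne13 hd, V1, hm1, hm2, hm3]
    · by_cases h2 : i = 2
      · subst h2
        simp [Ne.symm (ne02 hd), Ne.symm (ne12 hd), ne23 hd, V2, hm1, hm2, hm3]
      · by_cases h3 : i = 3
        · subst h3
          simp [Ne.symm (ne03 hd), Ne.symm (ne13 hd), Ne.symm (ne23 hd), V3, hm1, hm2, hm3]
        · have hgt : ¬ (i : ℕ) ≤ 3 := by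
            intro hle
            have hv0 : (i:ℕ) ≠ 0 := fun h => h0 (eq_of_val0 hd h)
            have hv1 : (i:ℕ) ≠ 1 := fun h => h1 (eq_of_val1 hd h)
            have hv2 : (i:ℕ) ≠ 2 := fun h => h2 (eq_of_val2 hd h)
            have hv3 : (i:ℕ) ≠ 3 := fun h => h3 (eq_of_val3 hd h)
            omega
          simp [h0, h1, h2, h3, hgt]

lemma rmat_mem_Obeta : rmat d ∈ Obeta d := by
  rw [← rmat_eq hd]
  exact Obeta_mul (rot_mem_Obeta (ne01 hd) (eps01 hd) _) (rot_mem_Obeta (ne23 hd) (eps23 hd) _)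

lemma rmat_joined : JoinedIn (Obeta d) 1 (rmat d) := by
  refine JoinedIn.ofLine
    (f := fun t : ℝ => rot d 0 1 (Real.pi * t) * rot d 2 3 (Real.pi * t)) ?_ ?_ ?_ ?_
  · apply Continuous.continuousOn
    apply Continuous.matrix_mul <;>
    · apply continuous_matrix
      intro i j
      simp only [rot, Matrix.of_apply]
      split_ifs <;> fun_prop
  · beta_reduce
    rw [mul_zero, rot_zero (ne01 hd), rot_zero (ne23 hd), one_mul]
  · beta_reduce
    rw [mul_one, rmat_eq hd]
  · rintro m ⟨t, _, rfl⟩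
    exact Obeta_mul (rot_mem_Obeta (ne01 hd) (eps01 hd) _) (rot_mem_Obeta (ne23 hd) (eps23 hd) _)

end idx

lemma rmat_mul_self : rmat d * rmat d = 1 := by
  apply mat_ext
  intro v
  rw [one_mulVec, ← Matrix.mulVec_mulVec, rmat_mulVec, rmat_mulVec]
  funext i
  by_cases h : (i:ℕ) ≤ 3 <;> simp [h]

lemma hmat_mulVec (hd : 3 ≤ d) (v : Vd d) :
    (hmat d).mulVec v = fun i : Fin (d+1) =>
      if (i:ℕ) = 1 then v 2 else if (i:ℕ) = 2 then v 1 else 0 := by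
  funext i
  simp only [hmat, Matrix.mulVec, Matrix.of_apply, dotProduct]
  by_cases h1 : (i:ℕ) = 1
  · rw [Finset.sum_eq_single 2]
    · simp [h1, val2 hd, Nat.mod_eq_of_lt (show 2 < d+1 by omega)]
    · intro j _ hj
      have : ¬ (j:ℕ) = 2 := fun h => hj (eq_of_val2 hd h)
      simp [h1, this]
    · intro h; exact absurd (Finset.mem_univ _) h
  · by_cases h2 : (i:ℕ) = 2
    · rw [Finset.sum_eq_single 1]
      · simp [h2, val1 hd, h1, Nat.mod_eq_of_lt (show 1 < d+1 by omega)]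
      · intro j _ hj
        have : ¬ (j:ℕ) = 1 := fun h => hj (eq_of_val1 hd h)
        simp [h2, this]
      · intro h; exact absurd (Finset.mem_univ _) h
    · rw [Finset.sum_eq_zero]
      · simp [h1, h2]
      · intro j _
        simp [h1, h2]

lemma rmat_comm_hmat : rmat d * hmat d = hmat d * rmat d := by
  ext i j
  rw [rmat, Matrix.diagonal_mul, Matrix.mul_diagonal]
  simp only [hmat, Matrix.of_apply]
  by_cases hC : ((i:ℕ) = 1 ∧ (j:ℕ) = 2) ∨ ((i:ℕ) = 2 ∧ (j:ℕ) = 1)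
  · rw [if_pos hC]
    rcases hC with ⟨hi, hj⟩ | ⟨hi, hj⟩ <;>
      · rw [if_pos (show (i:ℕ) ≤ 3 by omega), if_pos (show (j:ℕ) ≤ 3 by omega)]
        ring
  · rw [if_neg hC]
    ring

end S15

namespace S15
open Matrix Finset
variable {d : ℕ}

lemma betaB_zero_of_supp (hd : 3 ≤ d) (z u : Vd d) (hz1 : z 1 = 0) (hz2 : z 2 = 0)
    (hu : ∀ j : Fin (d+1), (j:ℕ) ≠ 1 → (j:ℕ) ≠ 2 → u j = 0) : betaB d z u = 0 := by
  rw [betaB_def]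
  apply Finset.sum_eq_zero
  intro j _
  by_cases h1 : (j:ℕ) = 1
  · rw [eq_of_val1 hd h1, hz1]; ring
  · by_cases h2 : (j:ℕ) = 2
    · rw [eq_of_val2 hd h2, hz2]; ring
    · rw [hu j h1 h2]; ring

lemma Gmat_comm_hmat (hd : 3 ≤ d) {a b : Vd d} (ha1 : a 1 = 0) (ha2 : a 2 = 0)
    (hb1 : b 1 = 0) (hb2 : b 2 = 0) :
    Gmat d a b * hmat d = hmat d * Gmat d a b := by
  apply mat_ext
  intro v
  rw [← Matrix.mulVec_mulVec, ← Matrix.mulVec_mulVec, hmat_mulVec hd v, Gmat_mulVec,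
    Gmat_mulVec, hmat_mulVec hd]
  have hβ1 : betaB d (fun j => a j + b j)
      (fun i : Fin (d+1) => if (i:ℕ) = 1 then v 2 else if (i:ℕ) = 2 then v 1 else 0) = 0 :=
    betaB_zero_of_supp hd _ _ (by simp [ha1, hb1]) (by simp [ha2, hb2])
      (fun j h1 h2 => by simp [h1, h2])
  have hβ2 : betaB d a
      (fun i : Fin (d+1) => if (i:ℕ) = 1 then v 2 else if (i:ℕ) = 2 then v 1 else 0) = 0 :=
    betaB_zero_of_supp hd _ _ ha1 ha2 (fun j h1 h2 => by simp [h1, h2])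
  funext i
  simp only [hβ1, hβ2, ha1, ha2, hb1, hb2]
  split_ifs <;> ring

def NiceS (d : ℕ) (g : Mat d) : Prop :=
  JoinedIn (Obeta d) 1 g ∧ g * hmat d = hmat d * g

lemma NiceS.mem_Gh {g : Mat d} (h : NiceS d g) : g ∈ Gh d := by
  obtain ⟨⟨γ, hγ⟩, hcomm⟩ := h
  refine ⟨?_, hcomm⟩
  have hr : IsPreconnected (Set.range γ) := isPreconnected_range γ.continuous
  have hsub : Set.range γ ⊆ Obeta d := by rintro _ ⟨t, rfl⟩; exact hγ t
  have h1 : (1 : Mat d) ∈ Set.range γ := ⟨0, γ.source⟩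
  exact hr.subset_connectedComponentIn h1 hsub ⟨1, γ.target⟩

lemma NiceS.mul {g g' : Mat d} (h : NiceS d g) (h' : NiceS d g') : NiceS d (g * g') := by
  obtain ⟨⟨γ, hγ⟩, hcomm⟩ := h
  obtain ⟨⟨γ', hγ'⟩, hcomm'⟩ := h'
  constructor
  · refine ⟨⟨⟨fun t => γ t * γ' t, γ.continuous.matrix_mul γ'.continuous⟩, ?_, ?_⟩,
      fun t => Obeta_mul (hγ t) (hγ' t)⟩
    · simp
    · simp
  · rw [mul_assoc, hcomm', ← mul_assoc, hcomm, mul_assoc]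

end S15

namespace S15
open Matrix Finset
variable {d : ℕ}

lemma betaB_e0_right (v : Vd d) : betaB d v (evec d 0) = v 0 := by
  rw [betaB_comm, betaB_e0_left]

lemma betaB_e0_e0 : betaB d (evec d 0) (evec d 0) = 1 := by
  rw [betaB_e0_left]; simp [evec]

lemma evec0_at0 : evec d 0 0 = 1 := by simp [evec]
lemma evec0_at1 (hd : 3 ≤ d) : evec d 0 1 = 0 := by simp [evec, Ne.symm (ne01 hd)]
lemma evec0_at2 (hd : 3 ≤ d) : evec d 0 2 = 0 := by simp [evec, Ne.symm (ne02 hd)]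

def qfun (x0 t : ℝ) : ℝ := (1-t)^2 + 2*t*(1-t)*x0 + t^2

lemma qfun_ge_one {x0 t : ℝ} (hx0 : 1 ≤ x0) (ht0 : 0 ≤ t) (ht1 : t ≤ 1) :
    1 ≤ qfun x0 t := by
  unfold qfun
  nlinarith [mul_nonneg (mul_nonneg ht0 (by linarith : (0:ℝ) ≤ 1 - t)) (by linarith : (0:ℝ) ≤ x0 - 1)]

def pcurve (d : ℕ) (x : Vd d) (t : ℝ) : Vd d :=
  fun j => (Real.sqrt (qfun (x 0) t))⁻¹ * (evec d 0 j + t * (x j - evec d 0 j))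

lemma betaB_interp (e x : Vd d) (t : ℝ) :
    betaB d (fun j => e j + t*(x j - e j)) (fun j => e j + t*(x j - e j))
    = (1-t)^2 * betaB d e e + 2*t*(1-t) * betaB d e x + t^2 * betaB d x x := by
  simp only [betaB_def, Finset.mul_sum, ← Finset.sum_add_distrib]
  exact Finset.sum_congr rfl fun j _ => by ring

lemma betaB_scale (c : ℝ) (y z : Vd d) :
    betaB d (fun j => c * y j) (fun j => c * z j) = c^2 * betaB d y z := by
  rw [betaB_smul_left, betaB_smul_right]; ring

section pc
variable {x : Vd d} {t : ℝ} (hx : betaB d x x = 1) (hx0 : 1 ≤ x 0)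
  (ht0 : 0 ≤ t) (ht1 : t ≤ 1)

include hx hx0 ht0 ht1

lemma pcurve_norm : betaB d (pcurve d x t) (pcurve d x t) = 1 := by
  have hq : 1 ≤ qfun (x 0) t := qfun_ge_one hx0 ht0 ht1
  have h1 : betaB d (pcurve d x t) (pcurve d x t)
      = ((Real.sqrt (qfun (x 0) t))⁻¹)^2 *
        betaB d (fun j => evec d 0 j + t*(x j - evec d 0 j))
               (fun j => evec d 0 j + t*(x j - evec d 0 j)) :=
    betaB_scale _ _ _
  rw [h1, betaB_interp, betaB_e0_e0, betaB_e0_left]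
  have hs : Real.sqrt (qfun (x 0) t) ^ 2 = qfun (x 0) t :=
    Real.sq_sqrt (by linarith)
  have hsne : Real.sqrt (qfun (x 0) t) ≠ 0 := by
    have := Real.sqrt_pos.mpr (show 0 < qfun (x 0) t by linarith)
    linarith
  field_simp
  rw [hx]
  unfold qfun at hs ⊢
  linear_combination -hs

lemma pcurve_at0_pos : 0 < pcurve d x t 0 := by
  have hq : 1 ≤ qfun (x 0) t := qfun_ge_one hx0 ht0 ht1
  have hsp : 0 < Real.sqrt (qfun (x 0) t) := Real.sqrt_pos.mpr (by linarith)
  have : evec d 0 0 + t * (x 0 - evec d 0 0) = 1 + t * (x 0 - 1) := by rw [evec0_at0]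
  unfold pcurve
  rw [this]
  have h2 : 0 < 1 + t * (x 0 - 1) := by nlinarith
  positivity

end pc

lemma pcurve_at1 (hd : 3 ≤ d) {x : Vd d} (hx1 : x 1 = 0) (t : ℝ) : pcurve d x t 1 = 0 := by
  unfold pcurve
  rw [evec0_at1 hd, hx1]
  ring

lemma pcurve_at2 (hd : 3 ≤ d) {x : Vd d} (hx2 : x 2 = 0) (t : ℝ) : pcurve d x t 2 = 0 := by
  unfold pcurve
  rw [evec0_at2 hd, hx2]
  ring

lemma pcurve_zero (x : Vd d) : pcurve d x 0 = evec d 0 := by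
  funext j
  unfold pcurve qfun
  norm_num

lemma pcurve_one {x : Vd d} : pcurve d x 1 = x := by
  funext j
  unfold pcurve qfun
  norm_num

lemma pcurve_contOn {x : Vd d} (hx0 : 1 ≤ x 0) (k : Fin (d+1)) :
    ContinuousOn (fun t => pcurve d x t k) (Set.Icc (0:ℝ) 1) := by
  have hq : Continuous fun t : ℝ => qfun (x 0) t := by unfold qfun; fun_prop
  have hs : ContinuousOn (fun t : ℝ => Real.sqrt (qfun (x 0) t)) (Set.Icc (0:ℝ) 1) :=
    (Real.continuous_sqrt.comp hq).continuousOn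
  have hne : ∀ t ∈ Set.Icc (0:ℝ) 1, Real.sqrt (qfun (x 0) t) ≠ 0 := by
    intro t ht
    have := Real.sqrt_pos.mpr
      (show 0 < qfun (x 0) t by have := qfun_ge_one hx0 ht.1 ht.2; linarith)
    linarith
  exact (hs.inv₀ hne).mul (by fun_prop)

lemma betaB_contOn (F G : ℝ → Vd d) (s : Set ℝ)
    (hF : ∀ k, ContinuousOn (fun t => F t k) s) (hG : ∀ k, ContinuousOn (fun t => G t k) s) :
    ContinuousOn (fun t => betaB d (F t) (G t)) s := by
  simp only [betaB_def]
  apply continuousOn_finset_sum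
  intro j _
  exact (continuousOn_const.mul (hF j)).mul (hG j)

lemma Gmat_contOn (F G : ℝ → Vd d) (s : Set ℝ)
    (hF : ∀ k, ContinuousOn (fun t => F t k) s) (hG : ∀ k, ContinuousOn (fun t => G t k) s)
    (hden : ∀ t ∈ s, (1:ℝ) + betaB d (F t) (G t) ≠ 0) :
    ContinuousOn (fun t => Gmat d (F t) (G t)) s := by
  rw [continuousOn_iff_continuous_restrict]
  apply continuous_matrix
  intro i j
  simp only [Gmat, Matrix.of_apply, Set.restrict]
  have hFr : ∀ k, Continuous fun t : s => F ↑t k := fun k =>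
    continuousOn_iff_continuous_restrict.mp (hF k)
  have hGr : ∀ k, Continuous fun t : s => G ↑t k := fun k =>
    continuousOn_iff_continuous_restrict.mp (hG k)
  have hβr : Continuous fun t : s => betaB d (F ↑t) (G ↑t) :=
    continuousOn_iff_continuous_restrict.mp (betaB_contOn F G s hF hG)
  have hdenr : ∀ t : s, (1:ℝ) + betaB d (F ↑t) (G ↑t) ≠ 0 := fun t => hden ↑t t.2
  refine Continuous.add (Continuous.sub continuous_const ?_) ?_
  · exact ((continuous_const.mul ((hFr i).add (hGr i))).mul ((hFr j).add (hGr j))).div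
      (continuous_const.add hβr) hdenr
  · exact (continuous_const.mul (hGr i)).mul (hFr j)

end S15

namespace S15
open Matrix Finset
variable {d : ℕ}

lemma joined_from (hd : 3 ≤ d) {x : Vd d} (hx : betaB d x x = 1) (hx0 : 1 ≤ x 0) :
    JoinedIn (Obeta d) 1 (Gmat d (evec d 0) x) := by
  have hden : ∀ t ∈ Set.Icc (0:ℝ) 1, (1:ℝ) + betaB d (evec d 0) (pcurve d x t) ≠ 0 := by
    intro t ht
    rw [betaB_e0_left]
    have := pcurve_at0_pos hx hx0 ht.1 ht.2
    linarith
  refine JoinedIn.ofLine (f := fun t => Gmat d (evec d 0) (pcurve d x t)) ?_ ?_ ?_ ?_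
  · exact Gmat_contOn (fun _ => evec d 0) (pcurve d x) _ (fun k => continuousOn_const)
      (fun k => pcurve_contOn hx0 k) hden
  · beta_reduce
    rw [pcurve_zero, Gmat_self betaB_e0_e0]
  · beta_reduce
    rw [pcurve_one]
  · rintro m ⟨t, ht, rfl⟩
    exact Gmat_mem_Obeta betaB_e0_e0 (pcurve_norm hx hx0 ht.1 ht.2) (hden t ht)

lemma joined_to (hd : 3 ≤ d) {x : Vd d} (hx : betaB d x x = 1) (hx0 : 1 ≤ x 0) :
    JoinedIn (Obeta d) 1 (Gmat d x (evec d 0)) := by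
  have hden : ∀ t ∈ Set.Icc (0:ℝ) 1, (1:ℝ) + betaB d (pcurve d x t) (evec d 0) ≠ 0 := by
    intro t ht
    rw [betaB_e0_right]
    have := pcurve_at0_pos hx hx0 ht.1 ht.2
    linarith
  refine JoinedIn.ofLine (f := fun t => Gmat d (pcurve d x t) (evec d 0)) ?_ ?_ ?_ ?_
  · exact Gmat_contOn (pcurve d x) (fun _ => evec d 0) _ (fun k => pcurve_contOn hx0 k)
      (fun k => continuousOn_const) hden
  · beta_reduce
    rw [pcurve_zero, Gmat_self betaB_e0_e0]
  · beta_reduce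
    rw [pcurve_one]
  · rintro m ⟨t, ht, rfl⟩
    exact Gmat_mem_Obeta (pcurve_norm hx hx0 ht.1 ht.2) betaB_e0_e0 (hden t ht)

lemma NiceS_from (hd : 3 ≤ d) {x : Vd d} (hx : betaB d x x = 1) (hx1 : x 1 = 0)
    (hx2 : x 2 = 0) (hx0 : 1 ≤ x 0) : NiceS d (Gmat d (evec d 0) x) :=
  ⟨joined_from hd hx hx0, Gmat_comm_hmat hd (evec0_at1 hd) (evec0_at2 hd) hx1 hx2⟩

lemma NiceS_to (hd : 3 ≤ d) {x : Vd d} (hx : betaB d x x = 1) (hx1 : x 1 = 0)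
    (hx2 : x 2 = 0) (hx0 : 1 ≤ x 0) : NiceS d (Gmat d x (evec d 0)) :=
  ⟨joined_to hd hx hx0, Gmat_comm_hmat hd hx1 hx2 (evec0_at1 hd) (evec0_at2 hd)⟩

lemma NiceS_rmat (hd : 3 ≤ d) : NiceS d (rmat d) := ⟨rmat_joined hd, rmat_comm_hmat⟩

lemma one_le_sq (hd : 3 ≤ d) {x : Vd d} (hx : betaB d x x = 1) (hx1 : x 1 = 0) :
    1 ≤ (x 0)^2 := by
  have key : betaB d x x ≤ (x 0)^2 + (x 1)^2 := by
    rw [betaB_def]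
    have hle : ∀ j ∈ Finset.univ, eps d j * x j * x j
        ≤ (fun j : Fin (d+1) => if j = 0 then (x 0)^2 else if j = 1 then (x 1)^2 else 0) j := by
      intro j _
      by_cases h0 : j = 0
      · subst h0
        have he : eps d 0 = 1 := by
          unfold eps
          rw [if_pos (show ((0 : Fin (d+1)):ℕ) ≤ 1 by norm_num [show ((0:Fin (d+1)):ℕ) = 0 from rfl])]
        simp [he]
        nlinarith
      · by_cases h1 : j = 1
        · subst h1
          have he : eps d 1 = 1 := by
            unfold eps
            rw [if_pos (show ((1 : Fin (d+1)):ℕ) ≤ 1 by rw [val1 hd])]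
          simp [he, h0]
          nlinarith
        · have he : eps d j = -1 := by
            unfold eps
            rw [if_neg]
            intro hle
            have hv0 : (j:ℕ) ≠ 0 := fun h => h0 (eq_of_val0 hd h)
            have hv1 : (j:ℕ) ≠ 1 := fun h => h1 (eq_of_val1 hd h)
            omega
          simp [he, h0, h1]
          nlinarith [sq_nonneg (x j)]
    calc ∑ j, eps d j * x j * x j
        ≤ ∑ j, (fun j : Fin (d+1) => if j = 0 then (x 0)^2 else if j = 1 then (x 1)^2 else 0) j :=
          Finset.sum_le_sum hle
      _ = (x 0)^2 + (x 1)^2 := by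
          rw [sum_two (ne01 hd)]
          · simp [Ne.symm (ne01 hd)]
          · intro j hj0 hj1
            simp [hj0, hj1]
  rw [hx, hx1] at key
  nlinarith

section sheets
variable (hd : 3 ≤ d)
include hd

lemma rmat_props {x : Vd d} (hx : betaB d x x = 1) (hx1 : x 1 = 0) (hx2 : x 2 = 0) :
    betaB d ((rmat d).mulVec x) ((rmat d).mulVec x) = 1 ∧ (rmat d).mulVec x 1 = 0 ∧
      (rmat d).mulVec x 2 = 0 ∧ (rmat d).mulVec x 0 = -(x 0) := by
  refine ⟨by rw [(rmat_mem_Obeta hd).2 x x, hx], ?_, ?_, ?_⟩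
  · rw [rmat_mulVec]; beta_reduce; rw [hx1]; ring
  · rw [rmat_mulVec]; beta_reduce; rw [hx2]; ring
  · rw [rmat_mulVec]; beta_reduce
    rw [if_pos (show ((0 : Fin (d+1)):ℕ) ≤ 3 by norm_num [show ((0:Fin (d+1)):ℕ) = 0 from rfl])]
    ring

lemma exists_to {x : Vd d} (hx : betaB d x x = 1) (hx1 : x 1 = 0) (hx2 : x 2 = 0) :
    ∃ g, NiceS d g ∧ g.mulVec x = evec d 0 := by
  have hsq := one_le_sq hd hx hx1
  rcases le_or_gt 1 (x 0) with h | h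
  · refine ⟨Gmat d x (evec d 0), NiceS_to hd hx hx1 hx2 h, ?_⟩
    apply Gmat_maps hx betaB_e0_e0
    rw [betaB_e0_right]
    linarith
  · have hneg : x 0 ≤ -1 := by nlinarith
    obtain ⟨hx', h1', h2', h0'⟩ := rmat_props hd hx hx1 hx2
    have hge : 1 ≤ (rmat d).mulVec x 0 := by rw [h0']; linarith
    refine ⟨Gmat d ((rmat d).mulVec x) (evec d 0) * rmat d,
      (NiceS_to hd hx' h1' h2' hge).mul (NiceS_rmat hd), ?_⟩
    rw [← Matrix.mulVec_mulVec]
    apply Gmat_maps hx' betaB_e0_e0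
    rw [betaB_e0_right]
    linarith

lemma exists_from {y : Vd d} (hy : betaB d y y = 1) (hy1 : y 1 = 0) (hy2 : y 2 = 0) :
    ∃ g, NiceS d g ∧ g.mulVec (evec d 0) = y := by
  have hsq := one_le_sq hd hy hy1
  rcases le_or_gt 1 (y 0) with h | h
  · refine ⟨Gmat d (evec d 0) y, NiceS_from hd hy hy1 hy2 h, ?_⟩
    apply Gmat_maps betaB_e0_e0 hy
    rw [betaB_e0_left]
    linarith
  · have hneg : y 0 ≤ -1 := by nlinarith
    obtain ⟨hy', h1', h2', h0'⟩ := rmat_props hd hy hy1 hy2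
    have hge : 1 ≤ (rmat d).mulVec y 0 := by rw [h0']; linarith
    refine ⟨rmat d * Gmat d (evec d 0) ((rmat d).mulVec y),
      (NiceS_rmat hd).mul (NiceS_from hd hy' h1' h2' hge), ?_⟩
    rw [← Matrix.mulVec_mulVec]
    have := Gmat_maps betaB_e0_e0 hy' (show (1:ℝ) + betaB d (evec d 0) ((rmat d).mulVec y) ≠ 0 by
      rw [betaB_e0_left]; linarith)
    rw [this, Matrix.mulVec_mulVec, rmat_mul_self, one_mulVec]

end sheets
end S15


/-- For `d ≥ 3`, the centralizer `G^h` acts transitively on the fixed point set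
`M^α = {x ∈ M : x₁ = x₂ = 0}` of the modular flow. -/
theorem stmt15 (d : ℕ) (hd : 3 ≤ d) :
    ∀ x ∈ {z ∈ AdS d | z 1 = 0 ∧ z 2 = 0},
      ∀ y ∈ {z ∈ AdS d | z 1 = 0 ∧ z 2 = 0},
        ∃ g ∈ Gh d, g.mulVec x = y := by
  rintro x ⟨hxA, hx1, hx2⟩ y ⟨hyA, hy1, hy2⟩
  obtain ⟨gx, hgx, hgxact⟩ := S15.exists_to hd hxA hx1 hx2
  obtain ⟨gy, hgy, hgyact⟩ := S15.exists_from hd hyA hy1 hy2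
  exact ⟨gy * gx, (hgy.mul hgx).mem_Gh, by
    rw [← Matrix.mulVec_mulVec, hgxact, hgyact]⟩
end
end

section
/- For every g ∈ G with g ∘ τ_h = τ_h ∘ g one has g ∘ h ∘ g⁻¹ = h or g ∘ h ∘ g⁻¹ = −h; moreover there exists g ∈ G^{τ_h} with g ∘ h ∘ g⁻¹ = −h, namely g = diag(−1,−1,1,…,1). Hence Ad(G^{τ_h})h = {h, −h} and G^{τ_h} ∖ G^h = {g ∈ G^{τ_h} : g ∘ h ∘ g⁻¹ = −h}. -/
noncomputable section

/-- `r₀₁ = diag(−1,−1,1,…,1)`. -/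
def r01 (d : ℕ) : Mat d :=
  Matrix.diagonal fun j : Fin (d + 1) => if (j : ℕ) ≤ 1 then (-1 : ℝ) else 1

namespace S16
variable {d : ℕ}

lemma sum_two {n : ℕ} (a b : Fin n) (hab : a ≠ b) (f g : Fin n → ℝ) :
    ∑ k, (if k = a then f k else if k = b then g k else 0) = f a + g b := by
  have h : ∀ k : Fin n, (if k = a then f k else if k = b then g k else 0)
      = (if k = a then f k else 0) + (if k = b then g k else 0) := by
    intro k
    by_cases h1 : k = a
    · subst h1; simp [hab]
    · simp [h1]
  simp only [h, Finset.sum_add_distrib, Finset.sum_ite_eq', Finset.mem_univ, if_pos]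

lemma sum_support_pair {n : ℕ} (a b : Fin n) (hab : a ≠ b) (f : Fin n → ℝ)
    (hf : ∀ j, j ≠ a → j ≠ b → f j = 0) : ∑ j, f j = f a + f b := by
  rw [← Finset.sum_pair hab]
  apply (Finset.sum_subset (Finset.subset_univ _) ?_).symm
  intro x _ hx
  simp only [Finset.mem_insert, Finset.mem_singleton] at hx
  push_neg at hx
  exact hf x hx.1 hx.2

lemma fin_eq_iff {n : ℕ} (j : Fin n) (m : ℕ) (hm : m < n) : (j : ℕ) = m ↔ j = ⟨m, hm⟩ := by
  rw [Fin.ext_iff]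

lemma mulVec_evec (A : Mat d) (k : Fin (d+1)) : A.mulVec (evec d k) = fun j => A j k := by
  funext j
  simp [Matrix.mulVec, dotProduct, evec, mul_ite, Finset.sum_ite_eq']

lemma betaB_evec (x : Vd d) (k : Fin (d+1)) :
    betaB d x (evec d k) = (if (k : ℕ) ≤ 1 then (1:ℝ) else -1) * x k := by
  simp [betaB, evec, mul_ite, Finset.sum_ite_eq']

lemma mem_Obeta_of_pres (A : Mat d)
    (h : ∀ x y : Vd d, betaB d (A.mulVec x) (A.mulVec y) = betaB d x y) : A ∈ Obeta d := by
  refine ⟨?_, h⟩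
  rw [Matrix.isUnit_iff_isUnit_det, isUnit_iff_ne_zero]
  intro hdet
  obtain ⟨v, hv0, hv⟩ := (Matrix.exists_mulVec_eq_zero_iff).2 hdet
  apply hv0
  funext j
  have h1 : betaB d v (evec d j) = 0 := by
    have := h v (evec d j)
    rw [hv] at this
    rw [← this]
    simp [betaB, Matrix.zero_mulVec]
  rw [betaB_evec] at h1
  rcases le_or_gt (j : ℕ) 1 with hj | hj
  · rw [if_pos hj, one_mul] at h1; exact h1
  · rw [if_neg (not_le.2 hj)] at h1
    show v j = (0:Vd d) j; rw [Pi.zero_apply]; linarith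

/-- Rotation in the (e0,e1)-plane. -/
def rot (d : ℕ) (t : ℝ) : Mat d :=
  Matrix.of fun j k : Fin (d+1) =>
    if (j : ℕ) = 0 then (if (k : ℕ) = 0 then Real.cos t else if (k : ℕ) = 1 then -Real.sin t else 0)
    else if (j : ℕ) = 1 then (if (k : ℕ) = 0 then Real.sin t else if (k : ℕ) = 1 then Real.cos t else 0)
    else (if k = j then 1 else 0)

lemma rot_mulVec (t : ℝ) (x : Vd d) (j : Fin (d+1)) (h0 : 0 < d + 1) (h1 : 1 < d + 1) :
    (rot d t).mulVec x j =
      if (j : ℕ) = 0 then Real.cos t * x ⟨0, h0⟩ - Real.sin t * x ⟨1, h1⟩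
      else if (j : ℕ) = 1 then Real.sin t * x ⟨0, h0⟩ + Real.cos t * x ⟨1, h1⟩
      else x j := by
  have hne : (⟨0, h0⟩ : Fin (d+1)) ≠ ⟨1, h1⟩ := by intro h; simpa using congrArg Fin.val h
  by_cases hj0 : (j : ℕ) = 0
  · rw [if_pos hj0]
    have key : ∀ k : Fin (d+1), rot d t j k * x k
        = (if k = ⟨0,h0⟩ then Real.cos t * x k else if k = ⟨1,h1⟩ then (-Real.sin t) * x k else 0) := by
      intro k
      simp only [rot, Matrix.of_apply, hj0, if_true, fin_eq_iff k 0 h0, fin_eq_iff k 1 h1]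
      split_ifs <;> first | ring1 | simp_all
    calc (rot d t).mulVec x j = ∑ k, rot d t j k * x k := rfl
      _ = _ := Finset.sum_congr rfl (fun k _ => key k)
      _ = _ := sum_two _ _ hne _ _
      _ = _ := by ring
  · rw [if_neg hj0]
    by_cases hj1 : (j : ℕ) = 1
    · rw [if_pos hj1]
      have key : ∀ k : Fin (d+1), rot d t j k * x k
          = (if k = ⟨0,h0⟩ then Real.sin t * x k else if k = ⟨1,h1⟩ then Real.cos t * x k else 0) := by
        intro k
        simp only [rot, Matrix.of_apply, hj0, hj1, if_true, if_false,
          fin_eq_iff k 0 h0, fin_eq_iff k 1 h1]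
        split_ifs <;> first | ring1 | simp_all
      calc (rot d t).mulVec x j = ∑ k, rot d t j k * x k := rfl
        _ = _ := Finset.sum_congr rfl (fun k _ => key k)
        _ = _ := sum_two _ _ hne _ _
    · rw [if_neg hj1]
      have key : ∀ k : Fin (d+1), rot d t j k * x k = (if k = j then x k else 0) := by
        intro k
        simp only [rot, Matrix.of_apply, hj0, hj1, if_false]
        split_ifs <;> first | ring1 | simp_all
      calc (rot d t).mulVec x j = ∑ k, rot d t j k * x k := rfl
        _ = _ := Finset.sum_congr rfl (fun k _ => key k)
        _ = x j := by simp [Finset.sum_ite_eq']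

lemma rot_pres (hd : 1 ≤ d) (t : ℝ) (x y : Vd d) :
    betaB d ((rot d t).mulVec x) ((rot d t).mulVec y) = betaB d x y := by
  have h0 : 0 < d + 1 := Nat.succ_pos d
  have h1 : 1 < d + 1 := by omega
  set e0 : Fin (d+1) := ⟨0, h0⟩ with he0
  set e1 : Fin (d+1) := ⟨1, h1⟩ with he1
  have hne : e0 ≠ e1 := by
    rw [he0, he1]; intro h; exact absurd (congrArg Fin.val h) (by norm_num)
  have hsub : ({e0, e1} : Finset (Fin (d+1))) ⊆ Finset.univ := Finset.subset_univ _
  unfold betaB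
  rw [← Finset.sum_sdiff hsub, ← Finset.sum_sdiff hsub]
  congr 1
  · apply Finset.sum_congr rfl
    intro j hj
    simp only [Finset.mem_sdiff, Finset.mem_insert, Finset.mem_singleton] at hj
    push_neg at hj
    have hj0 : ¬ (j : ℕ) = 0 := fun h => hj.2.1 ((fin_eq_iff j 0 h0).1 h)
    have hj1 : ¬ (j : ℕ) = 1 := fun h => hj.2.2 ((fin_eq_iff j 1 h1).1 h)
    rw [rot_mulVec t x j h0 h1, rot_mulVec t y j h0 h1, if_neg hj0, if_neg hj1,
      if_neg hj0, if_neg hj1]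
  · rw [Finset.sum_pair hne, Finset.sum_pair hne,
      rot_mulVec t x e0 h0 h1, rot_mulVec t x e1 h0 h1,
      rot_mulVec t y e0 h0 h1, rot_mulVec t y e1 h0 h1]
    have c00 : ((e0 : Fin (d+1)) : ℕ) = 0 := rfl
    have c11 : ((e1 : Fin (d+1)) : ℕ) = 1 := rfl
    rw [if_pos c00, if_pos c00]
    rw [if_neg (by rw [c11]; norm_num : ¬ ((e1 : Fin (d+1)) : ℕ) = 0),
        if_neg (by rw [c11]; norm_num : ¬ ((e1 : Fin (d+1)) : ℕ) = 0),
        if_pos c11, if_pos c11,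
        if_pos (by rw [c00]; norm_num : ((e0 : Fin (d+1)) : ℕ) ≤ 1),
        if_pos (by rw [c11] : ((e1 : Fin (d+1)) : ℕ) ≤ 1)]
    linear_combination (x e0 * y e0 + x e1 * y e1) * (Real.sin_sq_add_cos_sq t)

lemma rot_zero : rot d 0 = 1 := by
  ext j k
  simp only [rot, Matrix.of_apply, Real.cos_zero, Real.sin_zero, neg_zero, Matrix.one_apply]
  by_cases hj0 : (j:ℕ) = 0 <;> by_cases hj1 : (j:ℕ) = 1 <;> by_cases hk0 : (k:ℕ) = 0 <;>
    by_cases hk1 : (k:ℕ) = 1 <;> by_cases hjk : j = k <;>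
    (simp only [Fin.ext_iff] at *) <;> split_ifs <;> first | rfl | (exfalso; omega) | norm_num

lemma rot_pi : rot d Real.pi = r01 d := by
  ext j k
  simp only [rot, Matrix.of_apply, Real.cos_pi, Real.sin_pi, neg_zero, r01,
    Matrix.diagonal_apply]
  by_cases hj0 : (j:ℕ) = 0 <;> by_cases hj1 : (j:ℕ) = 1 <;> by_cases hj2 : (j:ℕ) ≤ 1 <;>
    by_cases hk0 : (k:ℕ) = 0 <;> by_cases hk1 : (k:ℕ) = 1 <;> by_cases hjk : j = k
  all_goals try (simp only [Fin.ext_iff] at *; split_ifs <;> first | rfl | (exfalso; omega) | norm_num)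
  all_goals try omega
  all_goals rw [if_neg (by omega)]

lemma rot_continuous : Continuous (fun t => rot d t) := by
  apply continuous_pi; intro j; apply continuous_pi; intro k
  simp only [rot, Matrix.of_apply]
  split_ifs <;> continuity

lemma r01_mem_Gset (hd : 1 ≤ d) : r01 d ∈ Gset d := by
  have hsub : (fun t => rot d t) '' Set.Icc 0 Real.pi ⊆ Obeta d := by
    rintro _ ⟨t, _, rfl⟩
    exact mem_Obeta_of_pres _ (rot_pres hd t)
  have hpre : IsPreconnected ((fun t => rot d t) '' Set.Icc 0 Real.pi) :=
    (isPreconnected_Icc).image _ (rot_continuous).continuousOn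
  have h1 : (1 : Mat d) ∈ (fun t => rot d t) '' Set.Icc 0 Real.pi :=
    ⟨0, Set.left_mem_Icc.2 Real.pi_nonneg, rot_zero⟩
  have hmem : r01 d ∈ (fun t => rot d t) '' Set.Icc 0 Real.pi :=
    ⟨Real.pi, Set.right_mem_Icc.2 Real.pi_nonneg, rot_pi⟩
  exact hpre.subset_connectedComponentIn h1 hsub hmem

lemma r01_tauh_comm : r01 d * tauh d = tauh d * r01 d := by
  rw [r01, tauh, Matrix.diagonal_mul_diagonal, Matrix.diagonal_mul_diagonal]
  exact congrArg Matrix.diagonal (funext fun i => mul_comm _ _)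

lemma r01_hmat_anticomm : r01 d * hmat d = -(hmat d * r01 d) := by
  ext i j
  simp only [r01, hmat, Matrix.diagonal_mul, Matrix.mul_diagonal, Matrix.neg_apply,
    Matrix.of_apply]
  by_cases hi1 : (i:ℕ) = 1 <;> by_cases hi2 : (i:ℕ) = 2 <;> by_cases hj1 : (j:ℕ) = 1 <;>
    by_cases hj2 : (j:ℕ) = 2 <;> simp_all <;> norm_num

lemma mul_hmat_apply (e1 e2 : Fin (d+1)) (h1 : (e1:ℕ) = 1) (h2 : (e2:ℕ) = 2)
    (g : Mat d) (i j : Fin (d+1)) :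
    (g * hmat d) i j = (if (j:ℕ) = 2 then g i e1 else 0) + (if (j:ℕ) = 1 then g i e2 else 0) := by
  have hne : e1 ≠ e2 := by intro h; rw [h, h2] at h1; exact absurd h1 (by norm_num)
  rw [Matrix.mul_apply]
  have key : ∀ k : Fin (d+1), g i k * hmat d k j =
      (if k = e1 then (if (j:ℕ) = 2 then g i k else 0)
       else if k = e2 then (if (j:ℕ) = 1 then g i k else 0) else 0) := by
    intro k
    simp only [hmat, Matrix.of_apply]
    by_cases hk1 : k = e1 <;> by_cases hk2 : k = e2 <;>
      by_cases hj1 : (j:ℕ) = 1 <;> by_cases hj2 : (j:ℕ) = 2 <;>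
      simp_all [Fin.ext_iff] <;> omega
  rw [Finset.sum_congr rfl (fun k _ => key k), sum_two _ _ hne]

lemma hmat_mul_apply (e1 e2 : Fin (d+1)) (h1 : (e1:ℕ) = 1) (h2 : (e2:ℕ) = 2)
    (g : Mat d) (i j : Fin (d+1)) :
    (hmat d * g) i j = (if (i:ℕ) = 1 then g e2 j else 0) + (if (i:ℕ) = 2 then g e1 j else 0) := by
  have hne : e2 ≠ e1 := by intro h; rw [h, h1] at h2; exact absurd h2 (by norm_num)
  rw [Matrix.mul_apply]
  have key : ∀ k : Fin (d+1), hmat d i k * g k j =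
      (if k = e2 then (if (i:ℕ) = 1 then g k j else 0)
       else if k = e1 then (if (i:ℕ) = 2 then g k j else 0) else 0) := by
    intro k
    simp only [hmat, Matrix.of_apply]
    by_cases hk1 : k = e1 <;> by_cases hk2 : k = e2 <;>
      by_cases hi1 : (i:ℕ) = 1 <;> by_cases hi2 : (i:ℕ) = 2 <;>
      simp_all [Fin.ext_iff] <;> omega
  rw [Finset.sum_congr rfl (fun k _ => key k), sum_two _ _ hne]

lemma final_eq (e1 e2 : Fin (d+1)) (hv1 : (e1:ℕ) = 1) (hv2 : (e2:ℕ) = 2)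
    (g : Mat d) (ε : ℝ)
    (hA : ∀ i j : Fin (d+1), ¬((i:ℕ) = 1 ∨ (i:ℕ) = 2) → ((j:ℕ) = 1 ∨ (j:ℕ) = 2) → g i j = 0)
    (hB : ∀ i j : Fin (d+1), ((i:ℕ) = 1 ∨ (i:ℕ) = 2) → ¬((j:ℕ) = 1 ∨ (j:ℕ) = 2) → g i j = 0)
    (hbe : g e1 e2 = ε * g e2 e1) (hbe' : g e2 e1 = ε * g e1 e2)
    (hae : g e1 e1 = ε * g e2 e2) (hae' : g e2 e2 = ε * g e1 e1) :
    g * hmat d = ε • (hmat d * g) := by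
  ext i j
  rw [Matrix.smul_apply, mul_hmat_apply e1 e2 hv1 hv2, hmat_mul_apply e1 e2 hv1 hv2,
    smul_eq_mul]
  by_cases hj1 : (j:ℕ) = 1
  · rw [show j = e1 from Fin.ext (by omega)]
    rw [if_neg (by omega : ¬ ((e1 : Fin (d+1)):ℕ) = 2), if_pos hv1, zero_add]
    by_cases hi1 : (i:ℕ) = 1
    · rw [show i = e1 from Fin.ext (by omega)]
      rw [if_pos hv1, if_neg (by omega : ¬ ((e1 : Fin (d+1)):ℕ) = 2), add_zero]
      exact hbe
    · by_cases hi2 : (i:ℕ) = 2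
      · rw [show i = e2 from Fin.ext (by omega)]
        rw [if_neg (by omega : ¬ ((e2 : Fin (d+1)):ℕ) = 1), if_pos hv2, zero_add]
        exact hae'
      · rw [if_neg hi1, if_neg hi2, hA i e2 (by omega) (Or.inr hv2)]
        ring
  · by_cases hj2 : (j:ℕ) = 2
    · rw [show j = e2 from Fin.ext (by omega)]
      rw [if_pos hv2, if_neg (by omega : ¬ ((e2 : Fin (d+1)):ℕ) = 1), add_zero]
      by_cases hi1 : (i:ℕ) = 1
      · rw [show i = e1 from Fin.ext (by omega)]
        rw [if_pos hv1, if_neg (by omega : ¬ ((e1 : Fin (d+1)):ℕ) = 2), add_zero]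
        exact hae
      · by_cases hi2 : (i:ℕ) = 2
        · rw [show i = e2 from Fin.ext (by omega)]
          rw [if_neg (by omega : ¬ ((e2 : Fin (d+1)):ℕ) = 1), if_pos hv2, zero_add]
          exact hbe'
        · rw [if_neg hi1, if_neg hi2, hA i e1 (by omega) (Or.inl hv1)]
          ring
    · rw [if_neg hj2, if_neg hj1, add_zero]
      by_cases hi1 : (i:ℕ) = 1
      · rw [if_pos hi1, if_neg (by omega), add_zero, hB e2 j (Or.inr hv2) (by omega)]
        ring
      · by_cases hi2 : (i:ℕ) = 2
        · rw [if_neg hi1, if_pos hi2, zero_add, hB e1 j (Or.inl hv1) (by omega)]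
          ring
        · rw [if_neg hi1, if_neg hi2]
          ring

/-- The main dichotomy. -/
lemma key_dichotomy (hd : 2 ≤ d) (g : Mat d) (hO : g ∈ Obeta d)
    (hcomm : g * tauh d = tauh d * g) :
    g * hmat d = hmat d * g ∨ g * hmat d = -(hmat d * g) := by
  obtain ⟨hu, hβ⟩ := hO
  have h1' : 1 < d + 1 := by omega
  have h2' : 2 < d + 1 := by omega
  set e1 : Fin (d+1) := ⟨1, h1'⟩ with he1
  set e2 : Fin (d+1) := ⟨2, h2'⟩ with he2
  have hv1 : (e1 : ℕ) = 1 := rfl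
  have hv2 : (e2 : ℕ) = 2 := rfl
  have hne : e1 ≠ e2 := by intro h; simpa [he1, he2] using congrArg Fin.val h
  -- block structure from commutation with tauh
  have hblock : ∀ i j : Fin (d+1),
      (((i:ℕ) = 1 ∨ (i:ℕ) = 2) ↔ ¬((j:ℕ) = 1 ∨ (j:ℕ) = 2)) → g i j = 0 := by
    intro i j hij
    have h := congrArg (fun M : Mat d => M i j) hcomm
    simp only [tauh, Matrix.mul_diagonal, Matrix.diagonal_mul] at h
    by_cases hi : (i:ℕ) = 1 ∨ (i:ℕ) = 2
    · have hj := hij.1 hi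
      rw [if_pos hi, if_neg hj] at h
      linarith
    · have hj : (j:ℕ) = 1 ∨ (j:ℕ) = 2 := by
        by_contra hj
        exact hi (hij.2 hj)
      rw [if_neg hi, if_pos hj] at h
      linarith
  have hA : ∀ i j : Fin (d+1), ¬((i:ℕ) = 1 ∨ (i:ℕ) = 2) → ((j:ℕ) = 1 ∨ (j:ℕ) = 2) →
      g i j = 0 := fun i j hi hj => hblock i j (by tauto)
  have hB : ∀ i j : Fin (d+1), ((i:ℕ) = 1 ∨ (i:ℕ) = 2) → ¬((j:ℕ) = 1 ∨ (j:ℕ) = 2) →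
      g i j = 0 := fun i j hi hj => hblock i j (by tauto)
  -- column relations
  have hcols : ∀ k l : Fin (d+1),
      (∑ j : Fin (d+1), (if (j:ℕ) ≤ 1 then (1:ℝ) else -1) * g j k * g j l)
        = betaB d (evec d k) (evec d l) := by
    intro k l
    rw [← hβ (evec d k) (evec d l), mulVec_evec, mulVec_evec]
    rfl
  have hcol2 : ∀ k : Fin (d+1), ((k:ℕ) = 1 ∨ (k:ℕ) = 2) → ∀ l : Fin (d+1),
      (∑ j : Fin (d+1), (if (j:ℕ) ≤ 1 then (1:ℝ) else -1) * g j k * g j l)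
        = g e1 k * g e1 l - g e2 k * g e2 l := by
    intro k hk l
    have hz : ∀ j : Fin (d+1), j ≠ e1 → j ≠ e2 →
        (if (j:ℕ) ≤ 1 then (1:ℝ) else -1) * g j k * g j l = 0 := by
      intro j hj1 hj2
      have hgz : g j k = 0 := by
        apply hA j k ?_ hk
        intro hc
        rcases hc with hc | hc
        · exact hj1 (Fin.ext (by rw [hc, hv1]))
        · exact hj2 (Fin.ext (by rw [hc, hv2]))
      rw [mul_assoc, hgz, zero_mul, mul_zero]
    rw [sum_support_pair e1 e2 hne _ hz,
      if_pos (by rw [hv1] : ((e1 : Fin (d+1)):ℕ) ≤ 1),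
      if_neg (by rw [hv2]; norm_num : ¬ ((e2 : Fin (d+1)):ℕ) ≤ 1)]
    ring
  set a := g e1 e1 with hadef
  set b := g e1 e2 with hbdef
  set c := g e2 e1 with hcdef
  set e := g e2 e2 with hedef
  have r1 : a * a - c * c = 1 := by
    have h := (hcol2 e1 (Or.inl hv1) e1).symm.trans (hcols e1 e1)
    rw [betaB_evec] at h
    simpa [evec, hv1] using h
  have r2 : b * b - e * e = -1 := by
    have h := (hcol2 e2 (Or.inr hv2) e2).symm.trans (hcols e2 e2)
    rw [betaB_evec] at h
    simpa [evec, hv2] using h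
  have r3 : a * b - c * e = 0 := by
    have h := (hcol2 e2 (Or.inr hv2) e1).symm.trans (hcols e2 e1)
    rw [betaB_evec] at h
    simp [evec, hne] at h
    linear_combination h
  have r4 : (a * b) * (a * b) = (c * e) * (c * e) := by
    have h : a * b = c * e := by linarith
    rw [h]
  have hbc : b * b = c * c := by
    linear_combination r4 - (b * b) * r1 - (c * c) * r2
  have hae0 : a * a = e * e := by linear_combination r1 + r2 - hbc
  have hea : e ≠ 0 := by
    intro h; rw [h] at r2; nlinarith [mul_self_nonneg b]
  have hb : b = c ∨ b = -c := by
    have h : (b - c) * (b + c) = 0 := by linear_combination hbc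
    rcases mul_eq_zero.1 h with h | h
    · left; linarith
    · right; linarith
  have ha : a = e ∨ a = -e := by
    have h : (a - e) * (a + e) = 0 := by linear_combination hae0
    rcases mul_eq_zero.1 h with h | h
    · left; linarith
    · right; linarith
  have hdich : (b = c ∧ a = e) ∨ (b = -c ∧ a = -e) := by
    rcases hb with hb | hb <;> rcases ha with ha | ha
    · exact Or.inl ⟨hb, ha⟩
    · -- b = c, a = -e forces b = c = 0
      have hce : c * e = 0 := by
        linear_combination (-(1/2 : ℝ)) * r3 + (b/2) * ha - (e/2) * hb
      have hc0 : c = 0 := by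
        rcases mul_eq_zero.1 hce with h | h
        · exact h
        · exact absurd h hea
      have hb0 : b = 0 := by rw [hb, hc0]
      exact Or.inr ⟨by rw [hb0, hc0, neg_zero], ha⟩
    · -- b = -c, a = e forces b = c = 0
      have hce : c * e = 0 := by
        linear_combination (-(1/2 : ℝ)) * r3 + (b/2) * ha + (e/2) * hb
      have hc0 : c = 0 := by
        rcases mul_eq_zero.1 hce with h | h
        · exact h
        · exact absurd h hea
      have hb0 : b = 0 := by rw [hb, hc0, neg_zero]
      exact Or.inl ⟨by rw [hb0, hc0], ha⟩
    · exact Or.inr ⟨hb, ha⟩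
  rcases hdich with ⟨hb', ha'⟩ | ⟨hb', ha'⟩
  · left
    have h := final_eq e1 e2 hv1 hv2 g 1 hA hB
      (by rw [← hbdef, ← hcdef, one_mul, hb'])
      (by rw [← hbdef, ← hcdef, one_mul, hb'])
      (by rw [← hadef, ← hedef, one_mul, ha'])
      (by rw [← hadef, ← hedef, one_mul, ha'])
    rw [h, one_smul]
  · right
    have h := final_eq e1 e2 hv1 hv2 g (-1) hA hB
      (by rw [← hbdef, ← hcdef]; rw [hb']; ring)
      (by rw [← hbdef, ← hcdef]; rw [show c = -b by rw [hb']; ring]; ring)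
      (by rw [← hadef, ← hedef]; rw [ha']; ring)
      (by rw [← hadef, ← hedef]; rw [show e = -a by rw [ha']; ring]; ring)
    rw [h, neg_one_smul]

end S16

/-- Every `g ∈ G` commuting with `τ_h` satisfies `ghg⁻¹ = h` or `ghg⁻¹ = −h`
(equivalently `gh = hg` or `gh = −hg`); `r₀₁ ∈ G^{τ_h}` satisfies `r₀₁ h r₀₁⁻¹ = −h`.
Hence `Ad(G^{τ_h})h = {h,−h}` and `G^{τ_h} ∖ G^h = {g ∈ G^{τ_h} : ghg⁻¹ = −h}`. -/
theorem stmt16 (d : ℕ) (hd : 2 ≤ d) :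
    (∀ g ∈ Gset d, g * tauh d = tauh d * g →
      g * hmat d = hmat d * g ∨ g * hmat d = -(hmat d * g)) ∧
    (r01 d ∈ Gset d ∧ r01 d * tauh d = tauh d * r01 d ∧
      r01 d * hmat d = -(hmat d * r01 d)) ∧
    {g ∈ Gset d | g * tauh d = tauh d * g} \ {g ∈ Gset d | g * hmat d = hmat d * g} =
      {g ∈ Gset d | g * tauh d = tauh d * g ∧ g * hmat d = -(hmat d * g)} := by
  have hd1 : 1 ≤ d := le_trans (by norm_num) hd
  refine ⟨?_, ⟨S16.r01_mem_Gset hd1, S16.r01_tauh_comm, S16.r01_hmat_anticomm⟩, ?_⟩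
  · intro g hg hcomm
    exact S16.key_dichotomy hd g (connectedComponentIn_subset _ _ hg) hcomm
  · ext g
    simp only [Set.mem_diff, Set.mem_setOf_eq]
    constructor
    · rintro ⟨⟨hG, hτ⟩, hnot⟩
      refine ⟨hG, hτ, ?_⟩
      rcases S16.key_dichotomy hd g (connectedComponentIn_subset _ _ hG) hτ with h | h
      · exact absurd ⟨hG, h⟩ hnot
      · exact h
    · rintro ⟨hG, hτ, hanti⟩
      refine ⟨⟨hG, hτ⟩, ?_⟩
      rintro ⟨-, hcomm⟩
      obtain ⟨hu, -⟩ := connectedComponentIn_subset _ _ hG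
      have hM : hmat d * g = -(hmat d * g) := hcomm.symm.trans hanti
      have hM0 : hmat d * g = 0 := by
        have hadd := eq_neg_iff_add_eq_zero.1 hM
        ext i j
        have h2 := congrArg (fun M : Mat d => M i j) hadd
        simp only [Matrix.add_apply, Matrix.zero_apply] at h2 ⊢
        linarith
      obtain ⟨u, hu'⟩ := hu
      have hh0 : hmat d = 0 := by
        calc hmat d = hmat d * (↑u * ↑u⁻¹) := by rw [Units.mul_inv, mul_one]
          _ = hmat d * ↑u * ↑u⁻¹ := by rw [mul_assoc]
          _ = hmat d * g * ↑u⁻¹ := by rw [hu']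
          _ = 0 * ↑u⁻¹ := by rw [hM0]
          _ = 0 := zero_mul _
      have h1' : 1 < d + 1 := by omega
      have h2' : 2 < d + 1 := by omega
      have := congrArg (fun M : Mat d => M ⟨1, h1'⟩ ⟨2, h2'⟩) hh0
      simp [hmat] at this
end
end
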